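/- arXiv:2206.09254 — 10 statements merged into one kernel-verified Lean document; each statement's English description precedes it below -/
import Mathlib

section
/- Suppose each player i uses the entropy regularizer, so that the M-FTRL strategy is the softmax π_i^t(a_i) = exp(z_i^t(a_i)) / Σ_{a'∈A_i} exp(z_i^t(a')), where t ↦ z_i^t(a_i) is differentiable with d/dt z_i^t(a_i) = q_i^{π^t}(a_i) + (μ/π_i^t(a_i))(c_i(a_i) − π_i^t(a_i)). Then for every player i and action a_i, the trajectory satisfies the replicator–mutator dynamics: d/dt π_i^t(a_i) = π_i^t(a_i)(q_i^{π^t}(a_i) − v_i^{π^t}) + μ(c_i(a_i) − π_i^t(a_i)). -/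
open Finset

noncomputable section

variable {A1 A2 : Type*}

/-- Expected utility of the strategy profile `(p1, p2)` under utility function `u`. -/
def eV [Fintype A1] [Fintype A2] (u : A1 → A2 → ℝ) (p1 : A1 → ℝ) (p2 : A2 → ℝ) : ℝ :=
  ∑ a1, ∑ a2, p1 a1 * p2 a2 * u a1 a2

/-- Conditional expected utility of action `a1` for player 1. -/
def cV1 [Fintype A2] (u : A1 → A2 → ℝ) (p2 : A2 → ℝ) (a1 : A1) : ℝ :=
  ∑ a2, p2 a2 * u a1 a2

/-- Conditional expected utility of action `a2` for player 2. -/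
def cV2 [Fintype A1] (u : A1 → A2 → ℝ) (p1 : A1 → ℝ) (a2 : A2) : ℝ :=
  ∑ a1, p1 a1 * u a1 a2

/-- Kullback–Leibler divergence (with the convention `0 ln 0 = 0`,
which holds since `Real.log 0 = 0` in Lean). -/
def KLd {A : Type*} [Fintype A] (p q : A → ℝ) : ℝ :=
  ∑ a, p a * Real.log (p a / q a)

/-- Bregman divergence associated with a differentiable function `ψ`. -/
def breg {A : Type*} [Fintype A] (ψ : (A → ℝ) → ℝ) (x y : A → ℝ) : ℝ :=
  ψ x - ψ y - fderiv ℝ ψ y (x - y)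

/-- Euclidean inner product on `A → ℝ`. -/
def ip {A : Type*} [Fintype A] (z p : A → ℝ) : ℝ := ∑ a, z a * p a

lemma softmax_deriv' {A : Type*} [Fintype A] (z : ℝ → A → ℝ) (d : A → ℝ) (t : ℝ)
    (hz : ∀ a, HasDerivAt (fun s => z s a) (d a) t)
    (π : ℝ → A → ℝ) (hπ : ∀ s a, π s a = Real.exp (z s a) / ∑ a', Real.exp (z s a'))
    (a : A) :
    HasDerivAt (fun s => π s a) (π t a * (d a - ∑ a', π t a' * d a')) t := by
  classical
  have hSd : HasDerivAt (fun s => ∑ a', Real.exp (z s a'))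
      (∑ a', Real.exp (z t a') * d a') t :=
    HasDerivAt.fun_sum fun a' _ => (hz a').exp
  have hSpos : 0 < ∑ a', Real.exp (z t a') :=
    Finset.sum_pos (fun a' _ => Real.exp_pos _) ⟨a, mem_univ a⟩
  have hne : (∑ a', Real.exp (z t a')) ≠ 0 := ne_of_gt hSpos
  have h := ((hz a).exp).fun_div hSd hne
  have heq : (fun s => π s a) = fun s => Real.exp (z s a) / ∑ a', Real.exp (z s a') := by
    funext s; exact hπ s a
  rw [heq]
  refine h.congr_deriv (Eq.symm ?_)
  have hsum : ∑ a', π t a' * d a'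
      = (∑ a', Real.exp (z t a') * d a') / ∑ a', Real.exp (z t a') := by
    rw [Finset.sum_div]
    exact Finset.sum_congr rfl fun a' _ => by rw [hπ t a', div_mul_eq_mul_div]
  rw [hπ t a, hsum]
  field_simp

/-- General one-player step. -/
lemma rmd_step {A : Type*} [Fintype A] (z π : ℝ → A → ℝ) (q c : A → ℝ)
    (μ : ℝ) (hcsum : ∑ a, c a = 1) (t : ℝ)
    (hπ : ∀ s a, π s a = Real.exp (z s a) / ∑ a', Real.exp (z s a'))
    (hz : ∀ a, HasDerivAt (fun s => z s a) (q a + μ / π t a * (c a - π t a)) t)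
    (a : A) :
    HasDerivAt (fun s => π s a)
      (π t a * (q a - ∑ a', π t a' * q a') + μ * (c a - π t a)) t := by
  classical
  have hπpos : ∀ a', 0 < π t a' := fun a' => by
    rw [hπ t a']
    exact div_pos (Real.exp_pos _)
      (Finset.sum_pos (fun x _ => Real.exp_pos _) ⟨a, mem_univ a⟩)
  have hπsum : ∑ a', π t a' = 1 := by
    have hne : (∑ a', Real.exp (z t a')) ≠ 0 :=
      ne_of_gt (Finset.sum_pos (fun x _ => Real.exp_pos _) ⟨a, mem_univ a⟩)
    simp only [hπ t]
    rw [← Finset.sum_div, div_self hne]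
  have h := softmax_deriv' z (fun a' => q a' + μ / π t a' * (c a' - π t a')) t hz π hπ a
  convert h using 1
  have hkey : ∀ a', π t a' * (q a' + μ / π t a' * (c a' - π t a'))
      = π t a' * q a' + μ * (c a' - π t a') := fun a' => by
    field_simp [(hπpos a').ne']
  rw [Finset.sum_congr rfl fun a' _ => hkey a', Finset.sum_add_distrib,
    ← Finset.mul_sum, Finset.sum_sub_distrib, hcsum, hπsum]
  have hμ0 : μ * ((1:ℝ) - 1) = 0 := by ring
  rw [hμ0, add_zero]
  field_simp [(hπpos a).ne']
  ring

/-- **Theorem 1.** If each player uses the entropy regularizer, so that the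
M-FTRL strategy is the softmax of the score `z`, where `z` is differentiable with
`d/dt z_i^t(a_i) = q_i^{π^t}(a_i) + (μ/π_i^t(a_i))(c_i(a_i) − π_i^t(a_i))`,
then the trajectory satisfies the replicator–mutator dynamics. -/
theorem mftrl_entropy_is_rmd
    [Fintype A1] [Fintype A2]
    (u1 u2 : A1 → A2 → ℝ) (hzs : ∀ a1 a2, u2 a1 a2 = -u1 a1 a2)
    (μ : ℝ) (hμ : 0 < μ)
    (c1 : A1 → ℝ) (c2 : A2 → ℝ)
    (hc1 : c1 ∈ stdSimplex ℝ A1) (hc1pos : ∀ a, 0 < c1 a)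
    (hc2 : c2 ∈ stdSimplex ℝ A2) (hc2pos : ∀ a, 0 < c2 a)
    (z1 : ℝ → A1 → ℝ) (z2 : ℝ → A2 → ℝ)
    (π1 : ℝ → A1 → ℝ) (π2 : ℝ → A2 → ℝ)
    (hπ1 : ∀ t a, π1 t a = Real.exp (z1 t a) / (∑ a', Real.exp (z1 t a')))
    (hπ2 : ∀ t a, π2 t a = Real.exp (z2 t a) / (∑ a', Real.exp (z2 t a')))
    (hz1 : ∀ t a, HasDerivAt (fun s => z1 s a)
      (cV1 u1 (π2 t) a + μ / π1 t a * (c1 a - π1 t a)) t)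
    (hz2 : ∀ t a, HasDerivAt (fun s => z2 s a)
      (cV2 u2 (π1 t) a + μ / π2 t a * (c2 a - π2 t a)) t) :
    (∀ t a, HasDerivAt (fun s => π1 s a)
      (π1 t a * (cV1 u1 (π2 t) a - eV u1 (π1 t) (π2 t)) + μ * (c1 a - π1 t a)) t) ∧
    (∀ t a, HasDerivAt (fun s => π2 s a)
      (π2 t a * (cV2 u2 (π1 t) a - eV u2 (π1 t) (π2 t)) + μ * (c2 a - π2 t a)) t) := by
  constructor
  · intro t a
    have h := rmd_step z1 π1 (cV1 u1 (π2 t)) c1 μ hc1.2 t hπ1 (fun a => hz1 t a) a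
    have hev : eV u1 (π1 t) (π2 t) = ∑ a', π1 t a' * cV1 u1 (π2 t) a' := by
      simp [eV, cV1, Finset.mul_sum, mul_assoc]
    rw [hev]; exact h
  · intro t a
    have h := rmd_step z2 π2 (cV2 u2 (π1 t)) c2 μ hc2.2 t hπ2 (fun a => hz2 t a) a
    have hev : eV u2 (π1 t) (π2 t) = ∑ a', π2 t a' * cV2 u2 (π1 t) a' := by
      rw [eV, Finset.sum_comm]
      simp [cV2, Finset.mul_sum]
      exact Finset.sum_congr rfl fun a2 _ => Finset.sum_congr rfl fun a1 _ => by ring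
    rw [hev]; exact h
end
end

section
/- Let t ↦ (π^t, z^t) be a continuous-time M-FTRL trajectory with strictly convex, continuously differentiable regularizers ψ₁, ψ₂, such that each π_i^t has full support and t ↦ π_i^t is differentiable, and let π^μ be a stationary point of the replicator–mutator dynamics with the same μ and c. Then the map t ↦ D_ψ(π^μ, π^t) is differentiable and d/dt D_ψ(π^μ, π^t) = −μ Σ_{i=1}^{2} Σ_{a_i∈A_i} c_i(a_i) (√(π_i^t(a_i)/π_i^μ(a_i)) − √(π_i^μ(a_i)/π_i^t(a_i)))². -/
open Finset

noncomputable section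

variable {A1 A2 : Type*}

/-- First-order optimality condition for the FTRL maximizer. -/
lemma mftrl_foc {A : Type*} [Fintype A] (ψ : (A → ℝ) → ℝ) (hψd : ContDiff ℝ 1 ψ)
    (z x : A → ℝ) (hx : x ∈ stdSimplex ℝ A) (hxpos : ∀ a, 0 < x a)
    (hmax : ∀ p ∈ stdSimplex ℝ A, ip z p - ψ p ≤ ip z x - ψ x)
    (v : A → ℝ) (hv : ∑ a, v a = 0) :
    fderiv ℝ ψ x v = ip z v := by
  have hne : Nonempty A := by
    by_contra h
    rw [not_nonempty_iff] at h
    have := hx.2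
    simp [Finset.univ_eq_empty] at this
  set M : ℝ := ∑ a, |v a| with hM
  have hM0 : 0 ≤ M := Finset.sum_nonneg fun a _ => abs_nonneg _
  have hvM : ∀ a, |v a| ≤ M := fun a =>
    Finset.single_le_sum (f := fun a => |v a|) (fun b _ => abs_nonneg _) (mem_univ a)
  obtain ⟨a0, -, hm⟩ := Finset.exists_min_image Finset.univ x ⟨Classical.arbitrary A, mem_univ _⟩
  set m : ℝ := x a0 with hmdef
  have hm0 : 0 < m := hxpos a0
  set ε : ℝ := m / (M + 1) with hε
  have hε0 : 0 < ε := div_pos hm0 (by linarith)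
  have hmem : ∀ s : ℝ, |s| < ε → x + s • v ∈ stdSimplex ℝ A := by
    intro s hs
    constructor
    · intro a
      have h1 : |s * v a| ≤ ε * M := by
        rw [abs_mul]
        exact mul_le_mul hs.le (hvM a) (abs_nonneg _) hε0.le
      have h2 : ε * M < m := by
        have : ε * (M + 1) = m := div_mul_cancel₀ m (by linarith)
        nlinarith
      have h3 : m ≤ x a := hm a (mem_univ a)
      have := neg_abs_le (s * v a)
      simp only [Pi.add_apply, Pi.smul_apply, smul_eq_mul]
      linarith
    · simp only [Pi.add_apply, Pi.smul_apply, smul_eq_mul]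
      rw [Finset.sum_add_distrib, hx.2, ← Finset.mul_sum, hv]
      ring
  set g : ℝ → ℝ := fun s => ip z (x + s • v) - ψ (x + s • v) with hg
  have hlocmax : IsLocalMax g 0 := by
    rw [IsLocalMax, IsMaxFilter]
    rw [Metric.eventually_nhds_iff]
    refine ⟨ε, hε0, fun s hs => ?_⟩
    rw [Real.dist_eq, sub_zero] at hs
    have h0 : x + (0:ℝ) • v = x := by simp
    simp only [hg, h0]
    exact hmax _ (hmem s hs)
  have haff : HasDerivAt (fun s : ℝ => x + s • v) v 0 := by
    have : HasDerivAt (fun s : ℝ => s • v) ((1:ℝ) • v) 0 := (hasDerivAt_id 0).smul_const v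
    simpa using this.const_add x
  have hψ' : HasDerivAt (fun s : ℝ => ψ (x + s • v)) (fderiv ℝ ψ x v) 0 := by
    have hd : HasFDerivAt ψ (fderiv ℝ ψ x) ((fun s : ℝ => x + s • v) 0) := by
      simpa using ((hψd.differentiable one_ne_zero) x).hasFDerivAt
    exact hd.comp_hasDerivAt 0 haff
  have hipeq : (fun s : ℝ => ip z (x + s • v)) = fun s => ip z x + s * ip z v := by
    funext s
    simp only [ip, Pi.add_apply, Pi.smul_apply, smul_eq_mul, mul_add]
    rw [Finset.sum_add_distrib, Finset.mul_sum]
    congr 1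
    exact Finset.sum_congr rfl fun a _ => by ring
  have hip : HasDerivAt (fun s : ℝ => ip z (x + s • v)) (ip z v) 0 := by
    rw [hipeq]
    simpa using ((hasDerivAt_id (0:ℝ)).mul_const (ip z v)).const_add (ip z x)
  have hgd : HasDerivAt g (ip z v - fderiv ℝ ψ x v) 0 := hip.sub hψ'
  have := hlocmax.hasDerivAt_eq_zero hgd
  linarith [this]

/-- Derivative of the per-player Bregman divergence along an FTRL trajectory. -/
lemma player_deriv {A : Type*} [Fintype A] (ψ : (A → ℝ) → ℝ) (hψd : ContDiff ℝ 1 ψ)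
    (z : ℝ → A → ℝ) (π : ℝ → A → ℝ) (πμ : A → ℝ) (hπμ : πμ ∈ stdSimplex ℝ A)
    (hmem : ∀ t, π t ∈ stdSimplex ℝ A)
    (hmax : ∀ t, ∀ p ∈ stdSimplex ℝ A, ip (z t) p - ψ p ≤ ip (z t) (π t) - ψ (π t))
    (hpos : ∀ t a, 0 < π t a) (hdiff : ∀ a, Differentiable ℝ fun t => π t a)
    (w : A → ℝ) (t : ℝ) (hz : ∀ a, HasDerivAt (fun s => z s a) (w a) t) :
    HasDerivAt (fun s => breg ψ πμ (π s)) (∑ a, w a * (π t a - πμ a)) t := by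
  set d : A → ℝ := fun a => deriv (fun s => π s a) t with hddef
  have hd : ∀ a, HasDerivAt (fun s => π s a) (d a) t := fun a =>
    ((hdiff a) t).hasDerivAt
  have hsum0 : ∑ a, d a = 0 := by
    have h1 : HasDerivAt (fun s => ∑ a, π s a) (∑ a, d a) t :=
      HasDerivAt.fun_sum fun a _ => hd a
    have h2 : (fun s => ∑ a, π s a) = fun _ => (1:ℝ) := funext fun s => (hmem s).2
    rw [h2] at h1
    exact h1.unique (hasDerivAt_const t 1)
  have hrw : (fun s => breg ψ πμ (π s)) =
      fun s => ψ πμ - ψ (π s) - (ip (z s) πμ - ip (z s) (π s)) := by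
    funext s
    unfold breg
    congr 1
    have hfoc := mftrl_foc ψ hψd (z s) (π s) (hmem s) (hpos s) (hmax s) (πμ - π s)
      (by simp only [Pi.sub_apply]; rw [Finset.sum_sub_distrib, hπμ.2, (hmem s).2]; ring)
    rw [hfoc]
    simp only [ip, Pi.sub_apply, mul_sub, Finset.sum_sub_distrib]
  rw [hrw]
  have hψt : HasDerivAt (fun s => ψ (π s)) (fderiv ℝ ψ (π t) d) t := by
    have hpi : HasDerivAt (fun s => π s) d t := hasDerivAt_pi.2 hd
    exact (((hψd.differentiable one_ne_zero) (π t)).hasFDerivAt).comp_hasDerivAt t hpi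
  have hipμ : HasDerivAt (fun s => ip (z s) πμ) (∑ a, w a * πμ a) t := by
    unfold ip
    exact HasDerivAt.fun_sum fun a _ => (hz a).mul_const (πμ a)
  have hipπ : HasDerivAt (fun s => ip (z s) (π s))
      (∑ a, (w a * π t a + z t a * d a)) t := by
    unfold ip
    exact HasDerivAt.fun_sum fun a _ => (hz a).mul (hd a)
  have H := ((hasDerivAt_const t (ψ πμ)).sub hψt).sub (hipμ.sub hipπ)
  convert H using 1
  case e'_4 => rfl
  case e'_5 => rfl
  case e'_8 => rfl
  have hfoc : fderiv ℝ ψ (π t) d = ip (z t) d :=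
    mftrl_foc ψ hψd (z t) (π t) (hmem t) (hpos t) (hmax t) d hsum0
  rw [hfoc]
  simp only [ip, mul_sub, Finset.sum_sub_distrib, Finset.sum_add_distrib]
  ring

lemma eV_cV1' [Fintype A1] [Fintype A2] (u : A1 → A2 → ℝ) (p : A1 → ℝ) (q : A2 → ℝ) :
    eV u p q = ∑ a, cV1 u q a * p a := by
  unfold eV cV1
  refine Finset.sum_congr rfl fun a _ => ?_
  rw [Finset.sum_mul]
  exact Finset.sum_congr rfl fun b _ => by ring

lemma eV_cV2' [Fintype A1] [Fintype A2] (u : A1 → A2 → ℝ) (p : A1 → ℝ) (q : A2 → ℝ) :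
    eV u p q = ∑ b, cV2 u p b * q b := by
  unfold eV cV2
  rw [Finset.sum_comm]
  refine Finset.sum_congr rfl fun b _ => ?_
  rw [Finset.sum_mul]
  exact Finset.sum_congr rfl fun a _ => by ring

lemma eV_zs' [Fintype A1] [Fintype A2] (u1 u2 : A1 → A2 → ℝ)
    (hzs : ∀ a1 a2, u2 a1 a2 = -u1 a1 a2) (p : A1 → ℝ) (q : A2 → ℝ) :
    eV u2 p q = -eV u1 p q := by
  unfold eV
  rw [← Finset.sum_neg_distrib]
  refine Finset.sum_congr rfl fun a _ => ?_
  rw [← Finset.sum_neg_distrib]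
  exact Finset.sum_congr rfl fun b _ => by rw [hzs]; ring

lemma sqrt_term' (x y : ℝ) (hx : 0 < x) (hy : 0 < y) :
    (Real.sqrt (x / y) - Real.sqrt (y / x)) ^ 2 = x / y + y / x - 2 := by
  have h1 : Real.sqrt (x / y) ^ 2 = x / y := Real.sq_sqrt (by positivity)
  have h2 : Real.sqrt (y / x) ^ 2 = y / x := Real.sq_sqrt (by positivity)
  have h3 : Real.sqrt (x / y) * Real.sqrt (y / x) = 1 := by
    rw [← Real.sqrt_mul (by positivity), show x / y * (y / x) = 1 by field_simp]
    exact Real.sqrt_one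
  linear_combination h1 + h2 - 2 * h3

/-- **Theorem 2, first part.** Along a continuous-time M-FTRL trajectory with
strictly convex, continuously differentiable regularizers (and full-support, differentiable
strategies), the Bregman divergence from a stationary point `π^μ` of the replicator–mutator
dynamics is differentiable in time with
`d/dt D_ψ(π^μ, π^t) = −μ Σ_i Σ_{a_i} c_i(a_i) (√(π_i^t(a_i)/π_i^μ(a_i)) − √(π_i^μ(a_i)/π_i^t(a_i)))²`. -/
theorem mftrl_bregman_derivative_stationary
    [Fintype A1] [Fintype A2]
    (u1 u2 : A1 → A2 → ℝ) (hzs : ∀ a1 a2, u2 a1 a2 = -u1 a1 a2)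
    (μ : ℝ) (hμ : 0 < μ)
    (c1 : A1 → ℝ) (c2 : A2 → ℝ)
    (hc1 : c1 ∈ stdSimplex ℝ A1) (hc1pos : ∀ a, 0 < c1 a)
    (hc2 : c2 ∈ stdSimplex ℝ A2) (hc2pos : ∀ a, 0 < c2 a)
    (ψ1 : (A1 → ℝ) → ℝ) (ψ2 : (A2 → ℝ) → ℝ)
    (hψ1 : StrictConvexOn ℝ (stdSimplex ℝ A1) ψ1) (hψ1d : ContDiff ℝ 1 ψ1)
    (hψ2 : StrictConvexOn ℝ (stdSimplex ℝ A2) ψ2) (hψ2d : ContDiff ℝ 1 ψ2)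
    (z1 : ℝ → A1 → ℝ) (z2 : ℝ → A2 → ℝ)
    (π1 : ℝ → A1 → ℝ) (π2 : ℝ → A2 → ℝ)
    (hmem1 : ∀ t, π1 t ∈ stdSimplex ℝ A1)
    (hmax1 : ∀ t, ∀ p ∈ stdSimplex ℝ A1,
      ip (z1 t) p - ψ1 p ≤ ip (z1 t) (π1 t) - ψ1 (π1 t))
    (hpos1 : ∀ t a, 0 < π1 t a)
    (hdiff1 : ∀ a, Differentiable ℝ fun t => π1 t a)
    (hmem2 : ∀ t, π2 t ∈ stdSimplex ℝ A2)
    (hmax2 : ∀ t, ∀ p ∈ stdSimplex ℝ A2,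
      ip (z2 t) p - ψ2 p ≤ ip (z2 t) (π2 t) - ψ2 (π2 t))
    (hpos2 : ∀ t a, 0 < π2 t a)
    (hdiff2 : ∀ a, Differentiable ℝ fun t => π2 t a)
    (hz1 : ∀ t a, HasDerivAt (fun s => z1 s a)
      (cV1 u1 (π2 t) a + μ / π1 t a * (c1 a - π1 t a)) t)
    (hz2 : ∀ t a, HasDerivAt (fun s => z2 s a)
      (cV2 u2 (π1 t) a + μ / π2 t a * (c2 a - π2 t a)) t)
    (π1μ : A1 → ℝ) (π2μ : A2 → ℝ)
    (hπ1μ : π1μ ∈ stdSimplex ℝ A1) (hπ2μ : π2μ ∈ stdSimplex ℝ A2)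
    (hst1 : ∀ a, π1μ a * (cV1 u1 π2μ a - eV u1 π1μ π2μ) + μ * (c1 a - π1μ a) = 0)
    (hst2 : ∀ a, π2μ a * (cV2 u2 π1μ a - eV u2 π1μ π2μ) + μ * (c2 a - π2μ a) = 0) :
    ∀ t, HasDerivAt (fun s => breg ψ1 π1μ (π1 s) + breg ψ2 π2μ (π2 s))
      (-μ * ((∑ a, c1 a * (Real.sqrt (π1 t a / π1μ a) - Real.sqrt (π1μ a / π1 t a)) ^ 2) +
             (∑ a, c2 a * (Real.sqrt (π2 t a / π2μ a) - Real.sqrt (π2μ a / π2 t a)) ^ 2))) t := by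
  intro t
  have hy1pos : ∀ a, 0 < π1μ a := by
    intro a
    rcases (hπ1μ.1 a).lt_or_eq with h | h
    · exact h
    · exfalso
      have h2 := hst1 a
      rw [← h] at h2
      simp at h2
      rcases h2 with h3 | h3
      exacts [hμ.ne' h3, (hc1pos a).ne' h3]
  have hy2pos : ∀ a, 0 < π2μ a := by
    intro a
    rcases (hπ2μ.1 a).lt_or_eq with h | h
    · exact h
    · exfalso
      have h2 := hst2 a
      rw [← h] at h2
      simp at h2
      rcases h2 with h3 | h3
      exacts [hμ.ne' h3, (hc2pos a).ne' h3]
  have H1 : HasDerivAt (fun s => breg ψ1 π1μ (π1 s))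
      (∑ a, (cV1 u1 (π2 t) a + μ / π1 t a * (c1 a - π1 t a)) * (π1 t a - π1μ a)) t :=
    player_deriv ψ1 hψ1d z1 π1 π1μ hπ1μ hmem1 hmax1 hpos1 hdiff1 _ t (hz1 t)
  have H2 : HasDerivAt (fun s => breg ψ2 π2μ (π2 s))
      (∑ a, (cV2 u2 (π1 t) a + μ / π2 t a * (c2 a - π2 t a)) * (π2 t a - π2μ a)) t :=
    player_deriv ψ2 hψ2d z2 π2 π2μ hπ2μ hmem2 hmax2 hpos2 hdiff2 _ t (hz2 t)
  convert H1.add H2 using 1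
  case e'_4 => rfl
  case e'_5 => rfl
  case e'_8 => rfl
  -- now pure algebra
  set x1 := π1 t
  set x2 := π2 t
  set S1xy := ∑ a, c1 a * (x1 a / π1μ a) with hS1xy
  set S1yx := ∑ a, c1 a * (π1μ a / x1 a) with hS1yx
  set S2xy := ∑ a, c2 a * (x2 a / π2μ a) with hS2xy
  set S2yx := ∑ a, c2 a * (π2μ a / x2 a) with hS2yx
  set v1 := eV u1 π1μ π2μ with hv1
  have hv2 : eV u2 π1μ π2μ = -v1 := eV_zs' u1 u2 hzs _ _
  -- sqrt sums
  have hT1 : ∑ a, c1 a * (Real.sqrt (x1 a / π1μ a) - Real.sqrt (π1μ a / x1 a)) ^ 2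
      = S1xy + S1yx - 2 := by
    have e : ∀ a ∈ Finset.univ, c1 a * (Real.sqrt (x1 a / π1μ a) - Real.sqrt (π1μ a / x1 a)) ^ 2
        = c1 a * (x1 a / π1μ a) + c1 a * (π1μ a / x1 a) - 2 * c1 a := fun a _ => by
      rw [sqrt_term' _ _ (hpos1 t a) (hy1pos a)]; ring
    rw [Finset.sum_congr rfl e, Finset.sum_sub_distrib, Finset.sum_add_distrib,
      ← Finset.mul_sum, hc1.2]
    ring
  have hT2 : ∑ a, c2 a * (Real.sqrt (x2 a / π2μ a) - Real.sqrt (π2μ a / x2 a)) ^ 2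
      = S2xy + S2yx - 2 := by
    have e : ∀ a ∈ Finset.univ, c2 a * (Real.sqrt (x2 a / π2μ a) - Real.sqrt (π2μ a / x2 a)) ^ 2
        = c2 a * (x2 a / π2μ a) + c2 a * (π2μ a / x2 a) - 2 * c2 a := fun a _ => by
      rw [sqrt_term' _ _ (hpos2 t a) (hy2pos a)]; ring
    rw [Finset.sum_congr rfl e, Finset.sum_sub_distrib, Finset.sum_add_distrib,
      ← Finset.mul_sum, hc2.2]
    ring
  -- stationarity consequences
  have hE1 : eV u1 x1 π2μ = v1 - μ * S1xy + μ := by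
    rw [eV_cV1' u1 x1 π2μ]
    rw [Finset.sum_congr rfl (fun a _ => by
      have h := hst1 a
      have hy := (hy1pos a).ne'
      rw [show cV1 u1 π2μ a * x1 a
          = v1 * x1 a - μ * (c1 a * (x1 a / π1μ a)) + μ * x1 a from by
        field_simp
        linear_combination x1 a * h])]
    rw [Finset.sum_add_distrib, Finset.sum_sub_distrib, ← Finset.mul_sum, ← Finset.mul_sum,
      ← Finset.mul_sum, (hmem1 t).2, ← hS1xy]
    ring
  have hE2 : eV u2 π1μ x2 = -v1 - μ * S2xy + μ := by
    rw [eV_cV2' u2 π1μ x2]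
    rw [Finset.sum_congr rfl (fun a _ => by
      have h := hst2 a
      have hy := (hy2pos a).ne'
      rw [show cV2 u2 π1μ a * x2 a
          = (-v1) * x2 a - μ * (c2 a * (x2 a / π2μ a)) + μ * x2 a from by
        rw [← hv2]
        field_simp
        linear_combination x2 a * h])]
    rw [Finset.sum_add_distrib, Finset.sum_sub_distrib, ← Finset.mul_sum, ← Finset.mul_sum,
      ← Finset.mul_sum, (hmem2 t).2, ← hS2xy]
    ring
  -- the two derivative sums
  have hD1 : ∑ a, (cV1 u1 x2 a + μ / x1 a * (c1 a - x1 a)) * (x1 a - π1μ a)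
      = eV u1 x1 x2 - eV u1 π1μ x2 + (μ - μ * S1yx) := by
    rw [Finset.sum_congr rfl (fun a _ => by
      have hx : x1 a ≠ 0 := (hpos1 t a).ne'
      rw [show (cV1 u1 x2 a + μ / x1 a * (c1 a - x1 a)) * (x1 a - π1μ a)
          = cV1 u1 x2 a * x1 a - cV1 u1 x2 a * π1μ a
            + (μ * c1 a - μ * x1 a + μ * π1μ a - μ * (c1 a * (π1μ a / x1 a))) from by
        field_simp
        ring])]
    rw [Finset.sum_add_distrib, Finset.sum_sub_distrib, Finset.sum_sub_distrib,
      Finset.sum_add_distrib, Finset.sum_sub_distrib,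
      ← Finset.mul_sum, ← Finset.mul_sum, ← Finset.mul_sum, ← Finset.mul_sum,
      hc1.2, (hmem1 t).2, hπ1μ.2, ← hS1yx, ← eV_cV1' u1 x1 x2, ← eV_cV1' u1 π1μ x2]
    ring
  have hD2 : ∑ a, (cV2 u2 x1 a + μ / x2 a * (c2 a - x2 a)) * (x2 a - π2μ a)
      = eV u2 x1 x2 - eV u2 x1 π2μ + (μ - μ * S2yx) := by
    rw [Finset.sum_congr rfl (fun a _ => by
      have hx : x2 a ≠ 0 := (hpos2 t a).ne'
      rw [show (cV2 u2 x1 a + μ / x2 a * (c2 a - x2 a)) * (x2 a - π2μ a)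
          = cV2 u2 x1 a * x2 a - cV2 u2 x1 a * π2μ a
            + (μ * c2 a - μ * x2 a + μ * π2μ a - μ * (c2 a * (π2μ a / x2 a))) from by
        field_simp
        ring])]
    rw [Finset.sum_add_distrib, Finset.sum_sub_distrib, Finset.sum_sub_distrib,
      Finset.sum_add_distrib, Finset.sum_sub_distrib,
      ← Finset.mul_sum, ← Finset.mul_sum, ← Finset.mul_sum, ← Finset.mul_sum,
      hc2.2, (hmem2 t).2, hπ2μ.2, ← hS2yx, ← eV_cV2' u2 x1 x2, ← eV_cV2' u2 x1 π2μ]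
    ring
  -- zero-sum relations
  have hzs1 : eV u2 x1 x2 = -eV u1 x1 x2 := eV_zs' u1 u2 hzs _ _
  have hzs2 : eV u2 x1 π2μ = -eV u1 x1 π2μ := eV_zs' u1 u2 hzs _ _
  have hzs3 : eV u2 π1μ x2 = -eV u1 π1μ x2 := eV_zs' u1 u2 hzs _ _
  rw [hT1, hT2, hD1, hD2]
  have h4 : eV u1 π1μ x2 = v1 + μ * S2xy - μ := by linarith [hE2, hzs3]
  linear_combination -hzs1 + hzs2 - hE1 + h4
end
end

section
/- Let t ↦ π^t be a differentiable trajectory in Δ°(A₁) × Δ°(A₂) following the replicator–mutator dynamics with mutation parameter μ > 0 and reference strategies c_i ∈ Δ°(A_i), let π^μ be a stationary point of these dynamics, and set ξ = min_{i∈{1,2}, a_i∈A_i} c_i(a_i)/π_i^μ(a_i). Then for all t, d/dt KL(π^μ, π^t) ≤ −μ ξ KL(π^μ, π^t). -/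
open Finset

noncomputable section

variable {A1 A2 : Type*}

lemma aux_sum_mul_cV1 [Fintype A1] [Fintype A2] (u : A1 → A2 → ℝ) (p : A1 → ℝ) (q : A2 → ℝ) :
    ∑ a, p a * cV1 u q a = eV u p q := by
  simp [eV, cV1, Finset.mul_sum, mul_assoc]

lemma aux_sum_mul_cV2 [Fintype A1] [Fintype A2] (u : A1 → A2 → ℝ) (p : A1 → ℝ) (q : A2 → ℝ) :
    ∑ b, q b * cV2 u p b = eV u p q := by
  simp only [eV, cV2, Finset.mul_sum]
  rw [Finset.sum_comm]
  exact Finset.sum_congr rfl fun a _ => Finset.sum_congr rfl fun b _ => by ring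

lemma aux_kl_deriv {A : Type*} [Fintype A] (pμ : A → ℝ) (hpμ : ∀ a, 0 < pμ a)
    (π : ℝ → A → ℝ) (D : A → ℝ) (t : ℝ) (hpos : ∀ s a, 0 < π s a)
    (hD : ∀ a, HasDerivAt (fun s => π s a) (D a) t) :
    HasDerivAt (fun s => KLd pμ (π s)) (-∑ a, pμ a * D a / π t a) t := by
  have h : ∀ a : A, HasDerivAt (fun s => pμ a * Real.log (pμ a / π s a))
      (-(pμ a * D a / π t a)) t := by
    intro a
    have hl : HasDerivAt (fun s => Real.log (π s a)) (D a / π t a) t :=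
      (hD a).log (ne_of_gt (hpos t a))
    have h2 := ((hl.const_mul (pμ a)).fun_neg).add_const (pμ a * Real.log (pμ a))
    have hfun : (fun s => pμ a * Real.log (pμ a / π s a))
        = (fun s => -(pμ a * Real.log (π s a)) + pμ a * Real.log (pμ a)) := by
      funext s
      rw [Real.log_div (ne_of_gt (hpμ a)) (ne_of_gt (hpos s a))]; ring
    rw [hfun]
    exact h2.congr_deriv (by ring)
  have hsum := HasDerivAt.fun_sum (fun a (_ : a ∈ Finset.univ) => h a)
  have : (-∑ a, pμ a * D a / π t a) = ∑ a, -(pμ a * D a / π t a) := by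
    rw [Finset.sum_neg_distrib]
  rw [this]
  exact hsum

lemma aux_kl_ineq {A : Type*} [Fintype A] (pμ p c : A → ℝ)
    (hpμ : ∀ a, 0 < pμ a) (hp : ∀ a, 0 < p a)
    (hspμ : ∑ a, pμ a = 1) (hsp : ∑ a, p a = 1)
    (ξ : ℝ) (hξ0 : 0 ≤ ξ) (hξ : ∀ a, ξ * pμ a ≤ c a) :
    ξ * KLd pμ p ≤ ∑ a, c a * (pμ a / p a + p a / pμ a - 2) := by
  have hE : ∀ a, 0 ≤ pμ a / p a + p a / pμ a - 2 := by
    intro a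
    have h : pμ a / p a + p a / pμ a - 2 = (pμ a - p a)^2 / (pμ a * p a) := by
      field_simp [(hpμ a).ne', (hp a).ne']
      ring
    rw [h]
    exact div_nonneg (sq_nonneg _) (mul_pos (hpμ a) (hp a)).le
  have h1 : ξ * (∑ a, pμ a * (pμ a / p a + p a / pμ a - 2))
      ≤ ∑ a, c a * (pμ a / p a + p a / pμ a - 2) := by
    rw [Finset.mul_sum]
    refine Finset.sum_le_sum fun a _ => ?_
    calc ξ * (pμ a * (pμ a / p a + p a / pμ a - 2))
        = (ξ * pμ a) * (pμ a / p a + p a / pμ a - 2) := by ring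
      _ ≤ c a * (pμ a / p a + p a / pμ a - 2) :=
          mul_le_mul_of_nonneg_right (hξ a) (hE a)
  have h2 : ∑ a, pμ a * (pμ a / p a + p a / pμ a - 2)
      = ∑ a, pμ a * (pμ a / p a) - 1 := by
    have hterm : ∀ a ∈ Finset.univ, pμ a * (pμ a / p a + p a / pμ a - 2)
        = pμ a * (pμ a / p a) + p a - 2 * pμ a := by
      intro a _
      have := (hpμ a).ne'
      field_simp
    rw [Finset.sum_congr rfl hterm, Finset.sum_sub_distrib, Finset.sum_add_distrib,
      hsp, ← Finset.mul_sum, hspμ]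
    ring
  have h3 : KLd pμ p ≤ ∑ a, pμ a * (pμ a / p a) - 1 := by
    have hle : ∀ a ∈ Finset.univ, pμ a * Real.log (pμ a / p a) ≤ pμ a * (pμ a / p a - 1) :=
      fun a _ => mul_le_mul_of_nonneg_left
        (Real.log_le_sub_one_of_pos (div_pos (hpμ a) (hp a))) (hpμ a).le
    calc KLd pμ p ≤ ∑ a, pμ a * (pμ a / p a - 1) := Finset.sum_le_sum hle
      _ = ∑ a, pμ a * (pμ a / p a) - 1 := by
          simp only [mul_sub, mul_one, Finset.sum_sub_distrib, hspμ]
  calc ξ * KLd pμ p ≤ ξ * (∑ a, pμ a * (pμ a / p a) - 1) :=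
        mul_le_mul_of_nonneg_left h3 hξ0
    _ = ξ * ∑ a, pμ a * (pμ a / p a + p a / pμ a - 2) := by rw [h2]
    _ ≤ _ := h1

/-- **Theorem 2, second part.** Along a differentiable full-support trajectory
of the replicator–mutator dynamics, with `π^μ` a stationary point and
`ξ = min_{i,a_i} c_i(a_i)/π_i^μ(a_i)`, we have `d/dt KL(π^μ, π^t) ≤ −μ ξ KL(π^μ, π^t)`. -/
theorem rmd_kl_derivative_bound
    [Fintype A1] [Fintype A2] [Nonempty A1] [Nonempty A2]
    (u1 u2 : A1 → A2 → ℝ) (hzs : ∀ a1 a2, u2 a1 a2 = -u1 a1 a2)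
    (μ : ℝ) (hμ : 0 < μ)
    (c1 : A1 → ℝ) (c2 : A2 → ℝ)
    (hc1 : c1 ∈ stdSimplex ℝ A1) (hc1pos : ∀ a, 0 < c1 a)
    (hc2 : c2 ∈ stdSimplex ℝ A2) (hc2pos : ∀ a, 0 < c2 a)
    (π1 : ℝ → A1 → ℝ) (π2 : ℝ → A2 → ℝ)
    (hmem1 : ∀ t, π1 t ∈ stdSimplex ℝ A1) (hpos1 : ∀ t a, 0 < π1 t a)
    (hmem2 : ∀ t, π2 t ∈ stdSimplex ℝ A2) (hpos2 : ∀ t a, 0 < π2 t a)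
    (hrmd1 : ∀ t a, HasDerivAt (fun s => π1 s a)
      (π1 t a * (cV1 u1 (π2 t) a - eV u1 (π1 t) (π2 t)) + μ * (c1 a - π1 t a)) t)
    (hrmd2 : ∀ t a, HasDerivAt (fun s => π2 s a)
      (π2 t a * (cV2 u2 (π1 t) a - eV u2 (π1 t) (π2 t)) + μ * (c2 a - π2 t a)) t)
    (π1μ : A1 → ℝ) (π2μ : A2 → ℝ)
    (hπ1μ : π1μ ∈ stdSimplex ℝ A1) (hπ2μ : π2μ ∈ stdSimplex ℝ A2)
    (hst1 : ∀ a, π1μ a * (cV1 u1 π2μ a - eV u1 π1μ π2μ) + μ * (c1 a - π1μ a) = 0)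
    (hst2 : ∀ a, π2μ a * (cV2 u2 π1μ a - eV u2 π1μ π2μ) + μ * (c2 a - π2μ a) = 0)
    (ξ : ℝ)
    (hξ : ξ = min (Finset.univ.inf' Finset.univ_nonempty fun a => c1 a / π1μ a)
                  (Finset.univ.inf' Finset.univ_nonempty fun a => c2 a / π2μ a)) :
    ∀ t, deriv (fun s => KLd π1μ (π1 s) + KLd π2μ (π2 s)) t ≤
      -μ * ξ * (KLd π1μ (π1 t) + KLd π2μ (π2 t)) := by
  intro t
  -- full support of the stationary point
  have hπ1μpos : ∀ a, 0 < π1μ a := by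
    intro a
    rcases lt_or_eq_of_le (hπ1μ.1 a) with h | h
    · exact h
    · exfalso
      have h0 := hst1 a
      rw [← h] at h0
      simp at h0
      rcases h0 with h0 | h0
      · exact hμ.ne' h0
      · exact (hc1pos a).ne' h0
  have hπ2μpos : ∀ b, 0 < π2μ b := by
    intro b
    rcases lt_or_eq_of_le (hπ2μ.1 b) with h | h
    · exact h
    · exfalso
      have h0 := hst2 b
      rw [← h] at h0
      simp at h0
      rcases h0 with h0 | h0
      · exact hμ.ne' h0
      · exact (hc2pos b).ne' h0
  -- zero-sum conversion
  have hcV2u : ∀ (p : A1 → ℝ) b, cV2 u2 p b = -cV2 u1 p b := by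
    intro p b; simp [cV2, hzs, mul_neg]
  have heVu : ∀ (p : A1 → ℝ) (q : A2 → ℝ), eV u2 p q = -eV u1 p q := by
    intro p q; simp [eV, hzs, mul_neg]
  -- derivative of the KL sum
  have hd1 := aux_kl_deriv π1μ hπ1μpos π1
    (fun a => π1 t a * (cV1 u1 (π2 t) a - eV u1 (π1 t) (π2 t)) + μ * (c1 a - π1 t a))
    t hpos1 (fun a => hrmd1 t a)
  have hd2 := aux_kl_deriv π2μ hπ2μpos π2
    (fun b => π2 t b * (cV2 u2 (π1 t) b - eV u2 (π1 t) (π2 t)) + μ * (c2 b - π2 t b))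
    t hpos2 (fun b => hrmd2 t b)
  have hderiv := (hd1.fun_add hd2).deriv
  rw [hderiv]
  -- expand the two derivative sums
  have e1 : (∑ a, π1μ a * (π1 t a * (cV1 u1 (π2 t) a - eV u1 (π1 t) (π2 t))
        + μ * (c1 a - π1 t a)) / π1 t a)
      = eV u1 π1μ (π2 t) - eV u1 (π1 t) (π2 t)
        + μ * (∑ a, π1μ a * c1 a / π1 t a) - μ := by
    have hterm : ∀ a ∈ Finset.univ, π1μ a * (π1 t a * (cV1 u1 (π2 t) a - eV u1 (π1 t) (π2 t))
        + μ * (c1 a - π1 t a)) / π1 t a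
        = (π1μ a * cV1 u1 (π2 t) a - π1μ a * eV u1 (π1 t) (π2 t))
          + (μ * (π1μ a * c1 a / π1 t a) - μ * π1μ a) := by
      intro a _
      field_simp [(hpos1 t a).ne']
    rw [Finset.sum_congr rfl hterm, Finset.sum_add_distrib, Finset.sum_sub_distrib,
      Finset.sum_sub_distrib, aux_sum_mul_cV1, ← Finset.sum_mul, hπ1μ.2,
      ← Finset.mul_sum, ← Finset.mul_sum, hπ1μ.2]
    ring
  have e2 : (∑ b, π2μ b * (π2 t b * (cV2 u2 (π1 t) b - eV u2 (π1 t) (π2 t))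
        + μ * (c2 b - π2 t b)) / π2 t b)
      = -eV u1 (π1 t) π2μ + eV u1 (π1 t) (π2 t)
        + μ * (∑ b, π2μ b * c2 b / π2 t b) - μ := by
    have hterm : ∀ b ∈ Finset.univ, π2μ b * (π2 t b * (cV2 u2 (π1 t) b - eV u2 (π1 t) (π2 t))
        + μ * (c2 b - π2 t b)) / π2 t b
        = (-(π2μ b * cV2 u1 (π1 t) b) + π2μ b * eV u1 (π1 t) (π2 t))
          + (μ * (π2μ b * c2 b / π2 t b) - μ * π2μ b) := by
      intro b _
      rw [hcV2u, heVu]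
      field_simp [(hpos2 t b).ne']
      ring
    rw [Finset.sum_congr rfl hterm, Finset.sum_add_distrib, Finset.sum_add_distrib,
      Finset.sum_sub_distrib, Finset.sum_neg_distrib, aux_sum_mul_cV2,
      ← Finset.sum_mul, hπ2μ.2, ← Finset.mul_sum, ← Finset.mul_sum, hπ2μ.2]
    ring
  -- stationarity consequences
  have hsum1 : eV u1 (π1 t) π2μ - eV u1 π1μ π2μ
      = μ * (1 - ∑ a, π1 t a * c1 a / π1μ a) := by
    have key : ∀ a ∈ Finset.univ, π1 t a * (cV1 u1 π2μ a - eV u1 π1μ π2μ)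
        = μ * (π1 t a - π1 t a * c1 a / π1μ a) := by
      intro a _
      have h := hst1 a
      field_simp [(hπ1μpos a).ne']
      linear_combination π1 t a * h
    calc eV u1 (π1 t) π2μ - eV u1 π1μ π2μ
        = ∑ a, π1 t a * (cV1 u1 π2μ a - eV u1 π1μ π2μ) := by
          simp only [mul_sub]
          rw [Finset.sum_sub_distrib, aux_sum_mul_cV1, ← Finset.sum_mul, (hmem1 t).2, one_mul]
      _ = ∑ a, μ * (π1 t a - π1 t a * c1 a / π1μ a) := Finset.sum_congr rfl key
      _ = μ * (1 - ∑ a, π1 t a * c1 a / π1μ a) := by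
          rw [← Finset.mul_sum, Finset.sum_sub_distrib, (hmem1 t).2]
  have hsum2 : eV u1 π1μ π2μ - eV u1 π1μ (π2 t)
      = μ * (1 - ∑ b, π2 t b * c2 b / π2μ b) := by
    have key : ∀ b ∈ Finset.univ, π2 t b * (-cV2 u1 π1μ b + eV u1 π1μ π2μ)
        = μ * (π2 t b - π2 t b * c2 b / π2μ b) := by
      intro b _
      have h := hst2 b
      rw [hcV2u, heVu] at h
      field_simp [(hπ2μpos b).ne']
      linear_combination π2 t b * h
    calc eV u1 π1μ π2μ - eV u1 π1μ (π2 t)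
        = ∑ b, π2 t b * (-cV2 u1 π1μ b + eV u1 π1μ π2μ) := by
          simp only [mul_add, mul_neg]
          rw [Finset.sum_add_distrib, Finset.sum_neg_distrib, aux_sum_mul_cV2,
            ← Finset.sum_mul, (hmem2 t).2, one_mul]
          ring
      _ = ∑ b, μ * (π2 t b - π2 t b * c2 b / π2μ b) := Finset.sum_congr rfl key
      _ = μ * (1 - ∑ b, π2 t b * c2 b / π2μ b) := by
          rw [← Finset.mul_sum, Finset.sum_sub_distrib, (hmem2 t).2]
  -- expansion of the target sums
  have hE1sum : ∑ a, c1 a * (π1μ a / π1 t a + π1 t a / π1μ a - 2)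
      = (∑ a, π1μ a * c1 a / π1 t a) + (∑ a, π1 t a * c1 a / π1μ a) - 2 := by
    have hterm : ∀ a ∈ Finset.univ, c1 a * (π1μ a / π1 t a + π1 t a / π1μ a - 2)
        = (π1μ a * c1 a / π1 t a + π1 t a * c1 a / π1μ a) - 2 * c1 a := by
      intro a _; ring
    rw [Finset.sum_congr rfl hterm, Finset.sum_sub_distrib, Finset.sum_add_distrib,
      ← Finset.mul_sum, hc1.2]
    ring
  have hE2sum : ∑ b, c2 b * (π2μ b / π2 t b + π2 t b / π2μ b - 2)
      = (∑ b, π2μ b * c2 b / π2 t b) + (∑ b, π2 t b * c2 b / π2μ b) - 2 := by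
    have hterm : ∀ b ∈ Finset.univ, c2 b * (π2μ b / π2 t b + π2 t b / π2μ b - 2)
        = (π2μ b * c2 b / π2 t b + π2 t b * c2 b / π2μ b) - 2 * c2 b := by
      intro b _; ring
    rw [Finset.sum_congr rfl hterm, Finset.sum_sub_distrib, Finset.sum_add_distrib,
      ← Finset.mul_sum, hc2.2]
    ring
  -- the key algebraic identity
  have hfe : (-∑ a, π1μ a * (π1 t a * (cV1 u1 (π2 t) a - eV u1 (π1 t) (π2 t))
        + μ * (c1 a - π1 t a)) / π1 t a)
      + (-∑ b, π2μ b * (π2 t b * (cV2 u2 (π1 t) b - eV u2 (π1 t) (π2 t))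
        + μ * (c2 b - π2 t b)) / π2 t b)
      = -μ * ((∑ a, c1 a * (π1μ a / π1 t a + π1 t a / π1μ a - 2))
        + (∑ b, c2 b * (π2μ b / π2 t b + π2 t b / π2μ b - 2))) := by
    linear_combination -e1 - e2 + hsum1 + hsum2 + μ * hE1sum + μ * hE2sum
  rw [hfe]
  -- ξ facts
  have hξ0 : 0 ≤ ξ := by
    rw [hξ]
    apply le_min
    · rw [Finset.le_inf'_iff]
      exact fun a _ => (div_pos (hc1pos a) (hπ1μpos a)).le
    · rw [Finset.le_inf'_iff]
      exact fun b _ => (div_pos (hc2pos b) (hπ2μpos b)).le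
  have hξ1 : ∀ a, ξ * π1μ a ≤ c1 a := by
    intro a
    have h : ξ ≤ c1 a / π1μ a := hξ ▸ (min_le_left _ _).trans (Finset.inf'_le _ (mem_univ a))
    exact (le_div_iff₀ (hπ1μpos a)).mp h
  have hξ2 : ∀ b, ξ * π2μ b ≤ c2 b := by
    intro b
    have h : ξ ≤ c2 b / π2μ b := hξ ▸ (min_le_right _ _).trans (Finset.inf'_le _ (mem_univ b))
    exact (le_div_iff₀ (hπ2μpos b)).mp h
  -- the two KL inequalities
  have hk1 := aux_kl_ineq π1μ (π1 t) c1 hπ1μpos (hpos1 t) hπ1μ.2 (hmem1 t).2 ξ hξ0 hξ1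
  have hk2 := aux_kl_ineq π2μ (π2 t) c2 hπ2μpos (hpos2 t) hπ2μ.2 (hmem2 t).2 ξ hξ0 hξ2
  nlinarith [mul_le_mul_of_nonneg_left (add_le_add hk1 hk2) hμ.le]
end
end

section
/- Let t ↦ (π^t, z^t) be a continuous-time M-FTRL trajectory with strictly convex, continuously differentiable regularizers ψ₁, ψ₂, such that each π_i^t has full support and t ↦ π_i^t is differentiable. Then for every fixed profile π ∈ Δ(A₁) × Δ(A₂), the map t ↦ D_ψ(π, π^t) is differentiable and d/dt D_ψ(π, π^t) = Σ_{i=1}^{2} v_i^{π_i^t, π_{−i}} + 2μ − μ Σ_{i=1}^{2} Σ_{a_i∈A_i} c_i(a_i) π_i(a_i)/π_i^t(a_i). -/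
open Finset

noncomputable section

variable {A1 A2 : Type*}

open Filter Topology in
lemma foc_aux {A : Type*} [Fintype A] (ψ : (A → ℝ) → ℝ) (hψd : ContDiff ℝ 1 ψ)
    (z p : A → ℝ) (hmem : p ∈ stdSimplex ℝ A) (hpos : ∀ a, 0 < p a)
    (hmax : ∀ q ∈ stdSimplex ℝ A, ip z q - ψ q ≤ ip z p - ψ p)
    (v : A → ℝ) (hv : ∑ a, v a = 0) :
    fderiv ℝ ψ p v = ip z v := by
  have hγ : HasDerivAt (fun s : ℝ => p + s • v) v 0 := by
    simpa using ((hasDerivAt_id (0:ℝ)).smul_const v).const_add p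
  have hψder : HasDerivAt (fun s : ℝ => ψ (p + s • v)) (fderiv ℝ ψ p v) 0 := by
    have h1 : HasFDerivAt ψ (fderiv ℝ ψ p) (p + (0:ℝ) • v) := by
      simpa using (hψd.differentiable one_ne_zero p).hasFDerivAt
    exact h1.comp_hasDerivAt 0 hγ
  have hiplin : ∀ s : ℝ, ip z (p + s • v) = ip z p + s * ip z v := by
    intro s
    simp only [ip, Pi.add_apply, Pi.smul_apply, smul_eq_mul, mul_add, Finset.sum_add_distrib,
      Finset.mul_sum]
    congr 1
    exact Finset.sum_congr rfl fun a _ => by ring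
  have hipder : HasDerivAt (fun s : ℝ => ip z (p + s • v)) (ip z v) 0 := by
    have h2 : HasDerivAt (fun s : ℝ => ip z p + s * ip z v) (ip z v) 0 := by
      simpa using ((hasDerivAt_id (0:ℝ)).mul_const (ip z v)).const_add (ip z p)
    have : (fun s : ℝ => ip z p + s * ip z v) = fun s : ℝ => ip z (p + s • v) := by
      funext s; rw [hiplin]
    rwa [this] at h2
  have hder : HasDerivAt (fun s : ℝ => ip z (p + s • v) - ψ (p + s • v))
      (ip z v - fderiv ℝ ψ p v) 0 := hipder.sub hψder
  have hmemnear : ∀ᶠ s in 𝓝 (0:ℝ), p + s • v ∈ stdSimplex ℝ A := by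
    have hall : ∀ᶠ s in 𝓝 (0:ℝ), ∀ a, 0 ≤ p a + s * v a := by
      refine Filter.eventually_all.mpr fun a => ?_
      have hc : Continuous fun s : ℝ => p a + s * v a := by continuity
      have ht : Tendsto (fun s : ℝ => p a + s * v a) (𝓝 0) (𝓝 (p a)) := by
        simpa using hc.tendsto 0
      exact (ht.eventually (eventually_gt_nhds (hpos a))).mono fun s hs => le_of_lt hs
    filter_upwards [hall] with s hs
    refine ⟨fun a => by simpa using hs a, ?_⟩
    simp only [Pi.add_apply, Pi.smul_apply, smul_eq_mul]
    rw [Finset.sum_add_distrib, hmem.2, ← Finset.mul_sum, hv]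
    ring
  have hloc : IsLocalMax (fun s : ℝ => ip z (p + s • v) - ψ (p + s • v)) 0 := by
    filter_upwards [hmemnear] with s hs
    have h0 : p + (0:ℝ) • v = p := by simp
    simpa [h0] using hmax _ hs
  have := hloc.hasDerivAt_eq_zero hder
  linarith

lemma breg_deriv_aux {A : Type*} [Fintype A] (ψ : (A → ℝ) → ℝ) (hψd : ContDiff ℝ 1 ψ)
    (z : ℝ → A → ℝ) (π : ℝ → A → ℝ) (w : ℝ → A → ℝ) (πf : A → ℝ)
    (hmem : ∀ t, π t ∈ stdSimplex ℝ A)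
    (hmax : ∀ t, ∀ p ∈ stdSimplex ℝ A, ip (z t) p - ψ p ≤ ip (z t) (π t) - ψ (π t))
    (hpos : ∀ t a, 0 < π t a)
    (hdiff : ∀ a, Differentiable ℝ fun t => π t a)
    (hz : ∀ t a, HasDerivAt (fun s => z s a) (w t a) t)
    (hπf : πf ∈ stdSimplex ℝ A) (t : ℝ) :
    HasDerivAt (fun s => breg ψ πf (π s)) (-(∑ a, w t a * (πf a - π t a))) t := by
  have hfun : (fun s => breg ψ πf (π s))
      = fun s => ψ πf - ψ (π s) - ∑ a, z s a * (πf a - π s a) := by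
    funext s
    have hv : ∑ a, (πf - π s) a = 0 := by
      simp only [Pi.sub_apply]
      rw [Finset.sum_sub_distrib, hπf.2, (hmem s).2]
      ring
    have h := foc_aux ψ hψd (z s) (π s) (hmem s) (hpos s) (hmax s) (πf - π s) hv
    simp only [breg, h, ip, Pi.sub_apply]
  rw [hfun]
  set d : A → ℝ := fun a => deriv (fun s => π s a) t with hd
  have hπd : ∀ a, HasDerivAt (fun s => π s a) (d a) t := fun a => ((hdiff a) t).hasDerivAt
  have hsum0 : ∑ a, d a = 0 := by
    have h1 : HasDerivAt (fun s => ∑ a, π s a) (∑ a, d a) t :=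
      HasDerivAt.fun_sum fun a _ => hπd a
    have h2 : (fun s => ∑ a, π s a) = fun _ : ℝ => (1:ℝ) := funext fun s => (hmem s).2
    rw [h2] at h1
    exact h1.unique (hasDerivAt_const _ _)
  have hcurve : HasDerivAt (fun s => π s) d t := hasDerivAt_pi.mpr hπd
  have hψc : HasDerivAt (fun s => ψ (π s)) (fderiv ℝ ψ (π t) d) t :=
    ((hψd.differentiable one_ne_zero (π t)).hasFDerivAt).comp_hasDerivAt t hcurve
  have hfd : fderiv ℝ ψ (π t) d = ∑ a, z t a * d a := by
    have := foc_aux ψ hψd (z t) (π t) (hmem t) (hpos t) (hmax t) d hsum0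
    simpa [ip] using this
  have hG : HasDerivAt (fun s => ∑ a, z s a * (πf a - π s a))
      (∑ a, (w t a * (πf a - π t a) + z t a * (-(d a)))) t := by
    refine HasDerivAt.fun_sum fun a _ => ?_
    exact (hz t a).mul ((hπd a).const_sub (πf a))
  have total : HasDerivAt (fun s => ψ πf - ψ (π s) - ∑ a, z s a * (πf a - π s a))
      ((0 - fderiv ℝ ψ (π t) d) - ∑ a, (w t a * (πf a - π t a) + z t a * (-(d a)))) t :=
    ((hasDerivAt_const t (ψ πf)).sub hψc).sub hG
  convert total using 1
  rw [hfd, Finset.sum_add_distrib]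
  simp only [mul_neg, Finset.sum_neg_distrib]
  ring

/-- **Lemma 1.** Along a continuous-time M-FTRL trajectory with strictly convex,
continuously differentiable regularizers (and full-support, differentiable strategies),
for every fixed profile `π`, the Bregman divergence `D_ψ(π, π^t)` is differentiable in time with
`d/dt D_ψ(π, π^t) = Σ_i v_i^{π_i^t, π_{−i}} + 2μ − μ Σ_i Σ_{a_i} c_i(a_i) π_i(a_i)/π_i^t(a_i)`. -/
theorem mftrl_bregman_derivative
    [Fintype A1] [Fintype A2]
    (u1 u2 : A1 → A2 → ℝ) (hzs : ∀ a1 a2, u2 a1 a2 = -u1 a1 a2)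
    (μ : ℝ) (hμ : 0 < μ)
    (c1 : A1 → ℝ) (c2 : A2 → ℝ)
    (hc1 : c1 ∈ stdSimplex ℝ A1) (hc1pos : ∀ a, 0 < c1 a)
    (hc2 : c2 ∈ stdSimplex ℝ A2) (hc2pos : ∀ a, 0 < c2 a)
    (ψ1 : (A1 → ℝ) → ℝ) (ψ2 : (A2 → ℝ) → ℝ)
    (hψ1 : StrictConvexOn ℝ (stdSimplex ℝ A1) ψ1) (hψ1d : ContDiff ℝ 1 ψ1)
    (hψ2 : StrictConvexOn ℝ (stdSimplex ℝ A2) ψ2) (hψ2d : ContDiff ℝ 1 ψ2)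
    (z1 : ℝ → A1 → ℝ) (z2 : ℝ → A2 → ℝ)
    (π1 : ℝ → A1 → ℝ) (π2 : ℝ → A2 → ℝ)
    (hmem1 : ∀ t, π1 t ∈ stdSimplex ℝ A1)
    (hmax1 : ∀ t, ∀ p ∈ stdSimplex ℝ A1,
      ip (z1 t) p - ψ1 p ≤ ip (z1 t) (π1 t) - ψ1 (π1 t))
    (hpos1 : ∀ t a, 0 < π1 t a)
    (hdiff1 : ∀ a, Differentiable ℝ fun t => π1 t a)
    (hmem2 : ∀ t, π2 t ∈ stdSimplex ℝ A2)
    (hmax2 : ∀ t, ∀ p ∈ stdSimplex ℝ A2,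
      ip (z2 t) p - ψ2 p ≤ ip (z2 t) (π2 t) - ψ2 (π2 t))
    (hpos2 : ∀ t a, 0 < π2 t a)
    (hdiff2 : ∀ a, Differentiable ℝ fun t => π2 t a)
    (hz1 : ∀ t a, HasDerivAt (fun s => z1 s a)
      (cV1 u1 (π2 t) a + μ / π1 t a * (c1 a - π1 t a)) t)
    (hz2 : ∀ t a, HasDerivAt (fun s => z2 s a)
      (cV2 u2 (π1 t) a + μ / π2 t a * (c2 a - π2 t a)) t)
    (π1f : A1 → ℝ) (π2f : A2 → ℝ)
    (hπ1f : π1f ∈ stdSimplex ℝ A1) (hπ2f : π2f ∈ stdSimplex ℝ A2) :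
    ∀ t, HasDerivAt (fun s => breg ψ1 π1f (π1 s) + breg ψ2 π2f (π2 s))
      ((eV u1 (π1 t) π2f + eV u2 π1f (π2 t)) + 2 * μ -
        μ * ((∑ a, c1 a * π1f a / π1 t a) + (∑ a, c2 a * π2f a / π2 t a))) t := by
  intro t
  have h1 := breg_deriv_aux ψ1 hψ1d z1 π1
    (fun t a => cV1 u1 (π2 t) a + μ / π1 t a * (c1 a - π1 t a)) π1f
    hmem1 hmax1 hpos1 hdiff1 hz1 hπ1f t
  have h2 := breg_deriv_aux ψ2 hψ2d z2 π2
    (fun t a => cV2 u2 (π1 t) a + μ / π2 t a * (c2 a - π2 t a)) π2f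
    hmem2 hmax2 hpos2 hdiff2 hz2 hπ2f t
  have hcomb := h1.fun_add h2
  refine HasDerivAt.congr_deriv hcomb ?_
  -- now an algebraic identity
  have hE : ∀ (p1 : A1 → ℝ) (p2 : A2 → ℝ), eV u2 p1 p2 = - eV u1 p1 p2 := by
    intro p1 p2
    simp [eV, hzs, mul_neg, Finset.sum_neg_distrib]
  have S1f : ∑ a, cV1 u1 (π2 t) a * π1f a = eV u1 π1f (π2 t) := by
    simp only [cV1, eV, Finset.sum_mul]
    exact Finset.sum_congr rfl fun a _ => Finset.sum_congr rfl fun b _ => by ring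
  have S1t : ∑ a, cV1 u1 (π2 t) a * π1 t a = eV u1 (π1 t) (π2 t) := by
    simp only [cV1, eV, Finset.sum_mul]
    exact Finset.sum_congr rfl fun a _ => Finset.sum_congr rfl fun b _ => by ring
  have S2f : ∑ a, cV2 u2 (π1 t) a * π2f a = eV u2 (π1 t) π2f := by
    simp only [cV2, eV, Finset.sum_mul]
    rw [Finset.sum_comm]
    exact Finset.sum_congr rfl fun a _ => Finset.sum_congr rfl fun b _ => by ring
  have S2t : ∑ a, cV2 u2 (π1 t) a * π2 t a = eV u2 (π1 t) (π2 t) := by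
    simp only [cV2, eV, Finset.sum_mul]
    rw [Finset.sum_comm]
    exact Finset.sum_congr rfl fun a _ => Finset.sum_congr rfl fun b _ => by ring
  have T1 : ∑ a, μ / π1 t a * (c1 a - π1 t a) * (π1f a - π1 t a)
      = μ * (∑ a, c1 a * π1f a / π1 t a) - μ := by
    have he : ∀ a, μ / π1 t a * (c1 a - π1 t a) * (π1f a - π1 t a)
        = μ * (c1 a * π1f a / π1 t a) - μ * c1 a - μ * π1f a + μ * π1 t a := by
      intro a
      have hne := (hpos1 t a).ne'
      field_simp
      ring
    simp only [he]
    rw [Finset.sum_add_distrib, Finset.sum_sub_distrib, Finset.sum_sub_distrib,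
      ← Finset.mul_sum, ← Finset.mul_sum, ← Finset.mul_sum, ← Finset.mul_sum,
      hc1.2, hπ1f.2, (hmem1 t).2]
    ring
  have T2 : ∑ a, μ / π2 t a * (c2 a - π2 t a) * (π2f a - π2 t a)
      = μ * (∑ a, c2 a * π2f a / π2 t a) - μ := by
    have he : ∀ a, μ / π2 t a * (c2 a - π2 t a) * (π2f a - π2 t a)
        = μ * (c2 a * π2f a / π2 t a) - μ * c2 a - μ * π2f a + μ * π2 t a := by
      intro a
      have hne := (hpos2 t a).ne'
      field_simp
      ring
    simp only [he]
    rw [Finset.sum_add_distrib, Finset.sum_sub_distrib, Finset.sum_sub_distrib,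
      ← Finset.mul_sum, ← Finset.mul_sum, ← Finset.mul_sum, ← Finset.mul_sum,
      hc2.2, hπ2f.2, (hmem2 t).2]
    ring
  have W1 : ∑ a, (cV1 u1 (π2 t) a + μ / π1 t a * (c1 a - π1 t a)) * (π1f a - π1 t a)
      = (eV u1 π1f (π2 t) - eV u1 (π1 t) (π2 t))
        + (μ * (∑ a, c1 a * π1f a / π1 t a) - μ) := by
    have he : ∀ a, (cV1 u1 (π2 t) a + μ / π1 t a * (c1 a - π1 t a)) * (π1f a - π1 t a)
        = (cV1 u1 (π2 t) a * π1f a - cV1 u1 (π2 t) a * π1 t a)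
          + μ / π1 t a * (c1 a - π1 t a) * (π1f a - π1 t a) := fun a => by ring
    simp only [he]
    rw [Finset.sum_add_distrib, Finset.sum_sub_distrib, S1f, S1t, T1]
  have W2 : ∑ a, (cV2 u2 (π1 t) a + μ / π2 t a * (c2 a - π2 t a)) * (π2f a - π2 t a)
      = (eV u2 (π1 t) π2f - eV u2 (π1 t) (π2 t))
        + (μ * (∑ a, c2 a * π2f a / π2 t a) - μ) := by
    have he : ∀ a, (cV2 u2 (π1 t) a + μ / π2 t a * (c2 a - π2 t a)) * (π2f a - π2 t a)
        = (cV2 u2 (π1 t) a * π2f a - cV2 u2 (π1 t) a * π2 t a)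
          + μ / π2 t a * (c2 a - π2 t a) * (π2f a - π2 t a) := fun a => by ring
    simp only [he]
    rw [Finset.sum_add_distrib, Finset.sum_sub_distrib, S2f, S2t, T2]
  rw [W1, W2, hE (π1 t) π2f, hE (π1 t) (π2 t), hE π1f (π2 t)]
  ring
end
end

section
/- Let π^μ be a stationary point of the replicator–mutator dynamics with mutation parameter μ > 0 and reference strategies c_i ∈ Δ°(A_i). Then for every player i ∈ {1,2} and every strategy π_i' ∈ Δ(A_i), v_i^{π_i', π_{−i}^μ} = v_i^{π^μ} + μ − μ Σ_{a_i∈A_i} c_i(a_i) π_i'(a_i)/π_i^μ(a_i). -/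
open Finset

noncomputable section

variable {A1 A2 : Type*}

/-- **Lemma 2.** Let `π^μ` be a stationary point of the replicator–mutator
dynamics. Then for every player `i` and every strategy `π_i' ∈ Δ(A_i)`,
`v_i^{π_i', π_{−i}^μ} = v_i^{π^μ} + μ − μ Σ_{a_i} c_i(a_i) π_i'(a_i)/π_i^μ(a_i)`. -/
theorem rmd_stationary_value
    [Fintype A1] [Fintype A2]
    (u1 u2 : A1 → A2 → ℝ) (hzs : ∀ a1 a2, u2 a1 a2 = -u1 a1 a2)
    (μ : ℝ) (hμ : 0 < μ)
    (c1 : A1 → ℝ) (c2 : A2 → ℝ)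
    (hc1 : c1 ∈ stdSimplex ℝ A1) (hc1pos : ∀ a, 0 < c1 a)
    (hc2 : c2 ∈ stdSimplex ℝ A2) (hc2pos : ∀ a, 0 < c2 a)
    (π1μ : A1 → ℝ) (π2μ : A2 → ℝ)
    (hπ1μ : π1μ ∈ stdSimplex ℝ A1) (hπ2μ : π2μ ∈ stdSimplex ℝ A2)
    (hst1 : ∀ a, π1μ a * (cV1 u1 π2μ a - eV u1 π1μ π2μ) + μ * (c1 a - π1μ a) = 0)
    (hst2 : ∀ a, π2μ a * (cV2 u2 π1μ a - eV u2 π1μ π2μ) + μ * (c2 a - π2μ a) = 0) :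
    (∀ π1' ∈ stdSimplex ℝ A1,
      eV u1 π1' π2μ = eV u1 π1μ π2μ + μ - μ * ∑ a, c1 a * π1' a / π1μ a) ∧
    (∀ π2' ∈ stdSimplex ℝ A2,
      eV u2 π1μ π2' = eV u2 π1μ π2μ + μ - μ * ∑ a, c2 a * π2' a / π2μ a) := by

  have hpos1 : ∀ a, 0 < π1μ a := by
    intro a
    rcases (hπ1μ.1 a).lt_or_eq with h | h
    · exact h
    · exfalso
      have h0 := hst1 a
      rw [← h] at h0
      have : μ * c1 a = 0 := by linarith [h0]
      nlinarith [hc1pos a]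
  have hpos2 : ∀ a, 0 < π2μ a := by
    intro a
    rcases (hπ2μ.1 a).lt_or_eq with h | h
    · exact h
    · exfalso
      have h0 := hst2 a
      rw [← h] at h0
      have : μ * c2 a = 0 := by linarith [h0]
      nlinarith [hc2pos a]
  have key1 : ∀ a, cV1 u1 π2μ a = eV u1 π1μ π2μ + μ - μ * c1 a / π1μ a := by
    intro a
    have h := hst1 a
    have hp := (hpos1 a).ne'
    field_simp
    nlinarith [h]
  have key2 : ∀ a, cV2 u2 π1μ a = eV u2 π1μ π2μ + μ - μ * c2 a / π2μ a := by
    intro a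
    have h := hst2 a
    have hp := (hpos2 a).ne'
    field_simp
    nlinarith [h]
  constructor
  · intro π1' hπ1'
    have hE : eV u1 π1' π2μ = ∑ a, π1' a * cV1 u1 π2μ a := by
      rw [eV]
      refine Finset.sum_congr rfl fun a1 _ => ?_
      rw [cV1, Finset.mul_sum]
      exact Finset.sum_congr rfl fun a2 _ => by ring
    rw [hE]
    have h2 : ∀ a ∈ Finset.univ, π1' a * cV1 u1 π2μ a =
        (eV u1 π1μ π2μ + μ) * π1' a - μ * (c1 a * π1' a / π1μ a) := by
      intro a _; rw [key1 a]; ring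
    rw [Finset.sum_congr rfl h2, Finset.sum_sub_distrib, ← Finset.mul_sum,
      ← Finset.mul_sum, hπ1'.2]
    ring
  · intro π2' hπ2'
    have hE : eV u2 π1μ π2' = ∑ a, π2' a * cV2 u2 π1μ a := by
      rw [eV, Finset.sum_comm]
      refine Finset.sum_congr rfl fun a2 _ => ?_
      rw [cV2, Finset.mul_sum]
      exact Finset.sum_congr rfl fun a1 _ => by ring
    rw [hE]
    have h2 : ∀ a ∈ Finset.univ, π2' a * cV2 u2 π1μ a =
        (eV u2 π1μ π2μ + μ) * π2' a - μ * (c2 a * π2' a / π2μ a) := by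
      intro a _; rw [key2 a]; ring
    rw [Finset.sum_congr rfl h2, Finset.sum_sub_distrib, ← Finset.mul_sum,
      ← Finset.mul_sum, hπ2'.2]
    ring
end
end

section
/- Fix a mutation parameter μ > 0 and reference strategies c_i ∈ Δ°(A_i). If π^μ and π' are both stationary points of the replicator–mutator dynamics in Δ(A₁) × Δ(A₂) (for the same μ and c), then π^μ = π'; that is, the stationary point of RMD is unique. -/
open Finset

noncomputable section

variable {A1 A2 : Type*}

lemma stat_pos {A : Type*} [Fintype A] {μ : ℝ} (hμ : 0 < μ) {c p : A → ℝ}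
    (hc : ∀ a, 0 < c a) (hp : p ∈ stdSimplex ℝ A) {q : A → ℝ} {v : ℝ}
    (h : ∀ a, p a * (q a - v) + μ * (c a - p a) = 0) : ∀ a, 0 < p a := by
  intro a
  rcases (hp.1 a).lt_or_eq with hlt | heq
  · exact hlt
  · exfalso
    have h2 := h a
    rw [← heq] at h2
    nlinarith [hc a]

lemma stat_key {A : Type*} [Fintype A] {μ : ℝ} (hμ : 0 < μ) {c p p' : A → ℝ}
    (hc : ∀ a, 0 < c a) (hp : p ∈ stdSimplex ℝ A) (hp' : p' ∈ stdSimplex ℝ A)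
    {q q' : A → ℝ} {v v' : ℝ}
    (h : ∀ a, p a * (q a - v) + μ * (c a - p a) = 0)
    (h' : ∀ a, p' a * (q' a - v') + μ * (c a - p' a) = 0) :
    ∑ a, (p' a - p a) * (q a - q' a)
      = -(μ * ∑ a, c a * (p' a - p a) ^ 2 / (p a * p' a)) := by
  have hpp := stat_pos hμ hc hp h
  have hpp' := stat_pos hμ hc hp' h'
  have hterm : ∀ a, (p' a - p a) * (q a - q' a)
      = (p' a - p a) * (v - v') - μ * (c a * (p' a - p a) ^ 2 / (p a * p' a)) := by
    intro a
    have h0 : p a ≠ 0 := (hpp a).ne'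
    have h0' : p' a ≠ 0 := (hpp' a).ne'
    have hq : q a - v = μ * (p a - c a) / p a := by
      rw [eq_div_iff h0]; linear_combination h a
    have hq' : q' a - v' = μ * (p' a - c a) / p' a := by
      rw [eq_div_iff h0']; linear_combination h' a
    have hd : q a - q' a = μ * (p a - c a) / p a - μ * (p' a - c a) / p' a + (v - v') := by
      linarith
    rw [hd]; field_simp; ring
  rw [Finset.sum_congr rfl (fun a _ => hterm a), Finset.sum_sub_distrib,
    ← Finset.sum_mul]
  have hs : ∑ a, (p' a - p a) = 0 := by
    rw [Finset.sum_sub_distrib, hp'.2, hp.2]; ring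
  rw [hs, zero_mul, zero_sub, ← Finset.mul_sum]

lemma stat_zero_eq {A : Type*} [Fintype A] {c p p' : A → ℝ}
    (hc : ∀ a, 0 < c a) (hpp : ∀ a, 0 < p a) (hpp' : ∀ a, 0 < p' a)
    (hz : ∑ a, c a * (p' a - p a) ^ 2 / (p a * p' a) = 0) : p = p' := by
  have hnn : ∀ a ∈ Finset.univ, 0 ≤ c a * (p' a - p a) ^ 2 / (p a * p' a) := by
    intro a _
    have := hc a; have := hpp a; have := hpp' a
    positivity
  have hall := (Finset.sum_eq_zero_iff_of_nonneg hnn).mp hz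
  funext a
  have h := hall a (Finset.mem_univ a)
  have hden : 0 < p a * p' a := mul_pos (hpp a) (hpp' a)
  rcases div_eq_zero_iff.mp h with h3 | h3
  · rcases mul_eq_zero.mp h3 with h4 | h4
    · exact absurd h4 (hc a).ne'
    · have h5 : p' a - p a = 0 := by
        have := sq_nonneg (p' a - p a)
        nlinarith [sq_abs (p' a - p a), abs_nonneg (p' a - p a)]
      linarith
  · exact absurd h3 hden.ne'

/-- **uniqueness of the RMD stationary point.** For a fixed mutation parameter
`μ > 0` and reference strategies `c_i ∈ Δ°(A_i)`, if `π^μ` and `π'` are both stationary points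
of the replicator–mutator dynamics in `Δ(A₁) × Δ(A₂)`, then `π^μ = π'`. -/
theorem rmd_stationary_unique
    [Fintype A1] [Fintype A2]
    (u1 u2 : A1 → A2 → ℝ) (hzs : ∀ a1 a2, u2 a1 a2 = -u1 a1 a2)
    (μ : ℝ) (hμ : 0 < μ)
    (c1 : A1 → ℝ) (c2 : A2 → ℝ)
    (hc1 : c1 ∈ stdSimplex ℝ A1) (hc1pos : ∀ a, 0 < c1 a)
    (hc2 : c2 ∈ stdSimplex ℝ A2) (hc2pos : ∀ a, 0 < c2 a)
    (π1μ : A1 → ℝ) (π2μ : A2 → ℝ)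
    (hπ1μ : π1μ ∈ stdSimplex ℝ A1) (hπ2μ : π2μ ∈ stdSimplex ℝ A2)
    (hst1 : ∀ a, π1μ a * (cV1 u1 π2μ a - eV u1 π1μ π2μ) + μ * (c1 a - π1μ a) = 0)
    (hst2 : ∀ a, π2μ a * (cV2 u2 π1μ a - eV u2 π1μ π2μ) + μ * (c2 a - π2μ a) = 0)
    (π1' : A1 → ℝ) (π2' : A2 → ℝ)
    (hπ1' : π1' ∈ stdSimplex ℝ A1) (hπ2' : π2' ∈ stdSimplex ℝ A2)
    (hst1' : ∀ a, π1' a * (cV1 u1 π2' a - eV u1 π1' π2') + μ * (c1 a - π1' a) = 0)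
    (hst2' : ∀ a, π2' a * (cV2 u2 π1' a - eV u2 π1' π2') + μ * (c2 a - π2' a) = 0) :
    π1μ = π1' ∧ π2μ = π2' := by
  have h1 : ∑ a1, (π1' a1 - π1μ a1) * (cV1 u1 π2μ a1 - cV1 u1 π2' a1)
      = ∑ a1, ∑ a2, (π1' a1 - π1μ a1) * (π2μ a2 - π2' a2) * u1 a1 a2 := by
    refine Finset.sum_congr rfl fun a1 _ => ?_
    simp only [cV1, ← Finset.sum_sub_distrib, Finset.mul_sum]
    exact Finset.sum_congr rfl fun a2 _ => by ring
  have h2 : ∑ a2, (π2' a2 - π2μ a2) * (cV2 u2 π1μ a2 - cV2 u2 π1' a2)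
      = ∑ a2, ∑ a1, -((π1' a1 - π1μ a1) * (π2μ a2 - π2' a2) * u1 a1 a2) := by
    refine Finset.sum_congr rfl fun a2 _ => ?_
    simp only [cV2, hzs, ← Finset.sum_sub_distrib, Finset.mul_sum]
    exact Finset.sum_congr rfl fun a1 _ => by ring
  have hA : (∑ a1, (π1' a1 - π1μ a1) * (cV1 u1 π2μ a1 - cV1 u1 π2' a1))
      + (∑ a2, (π2' a2 - π2μ a2) * (cV2 u2 π1μ a2 - cV2 u2 π1' a2)) = 0 := by
    rw [h1, h2, Finset.sum_comm]
    simp [← Finset.sum_add_distrib]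
  have k1 := stat_key hμ hc1pos hπ1μ hπ1' hst1 hst1'
  have k2 := stat_key hμ hc2pos hπ2μ hπ2' hst2 hst2'
  set S1 := ∑ a, c1 a * (π1' a - π1μ a) ^ 2 / (π1μ a * π1' a) with hS1
  set S2 := ∑ a, c2 a * (π2' a - π2μ a) ^ 2 / (π2μ a * π2' a) with hS2
  have hS1nn : 0 ≤ S1 := by
    apply Finset.sum_nonneg
    intro a _
    have := hc1pos a
    have := stat_pos hμ hc1pos hπ1μ hst1 a
    have := stat_pos hμ hc1pos hπ1' hst1' a
    positivity
  have hS2nn : 0 ≤ S2 := by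
    apply Finset.sum_nonneg
    intro a _
    have := hc2pos a
    have := stat_pos hμ hc2pos hπ2μ hst2 a
    have := stat_pos hμ hc2pos hπ2' hst2' a
    positivity
  rw [k1, k2] at hA
  have hS1z : S1 = 0 := by nlinarith
  have hS2z : S2 = 0 := by nlinarith
  exact ⟨stat_zero_eq hc1pos (stat_pos hμ hc1pos hπ1μ hst1)
      (stat_pos hμ hc1pos hπ1' hst1') hS1z,
    stat_zero_eq hc2pos (stat_pos hμ hc2pos hπ2μ hst2)
      (stat_pos hμ hc2pos hπ2' hst2') hS2z⟩
end
end

section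
/- Let π^μ be a stationary point of the replicator–mutator dynamics with mutation parameter μ > 0 and reference strategies c_i ∈ Δ°(A_i). Then for every player i ∈ {1,2} and every action a_i ∈ A_i, q_i^{π^μ}(a_i) − v_i^{π^μ} ≤ μ. -/
open Finset

noncomputable section

variable {A1 A2 : Type*}

/-- **Lemma 3.5 of Bauer et al..** Let `π^μ` be a stationary point of the
replicator–mutator dynamics with mutation parameter `μ > 0` and interior reference strategies.
Then for every player `i` and action `a_i`, `q_i^{π^μ}(a_i) − v_i^{π^μ} ≤ μ`. -/
theorem rmd_stationary_advantage_bound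
    [Fintype A1] [Fintype A2]
    (u1 u2 : A1 → A2 → ℝ) (hzs : ∀ a1 a2, u2 a1 a2 = -u1 a1 a2)
    (μ : ℝ) (hμ : 0 < μ)
    (c1 : A1 → ℝ) (c2 : A2 → ℝ)
    (hc1 : c1 ∈ stdSimplex ℝ A1) (hc1pos : ∀ a, 0 < c1 a)
    (hc2 : c2 ∈ stdSimplex ℝ A2) (hc2pos : ∀ a, 0 < c2 a)
    (π1μ : A1 → ℝ) (π2μ : A2 → ℝ)
    (hπ1μ : π1μ ∈ stdSimplex ℝ A1) (hπ2μ : π2μ ∈ stdSimplex ℝ A2)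
    (hst1 : ∀ a, π1μ a * (cV1 u1 π2μ a - eV u1 π1μ π2μ) + μ * (c1 a - π1μ a) = 0)
    (hst2 : ∀ a, π2μ a * (cV2 u2 π1μ a - eV u2 π1μ π2μ) + μ * (c2 a - π2μ a) = 0) :
    (∀ a, cV1 u1 π2μ a - eV u1 π1μ π2μ ≤ μ) ∧
    (∀ a, cV2 u2 π1μ a - eV u2 π1μ π2μ ≤ μ) := by
  have key : ∀ (p c q v : ℝ), 0 ≤ p → 0 < c → p * (q - v) + μ * (c - p) = 0 → q - v ≤ μ := by
    intro p c q v hp hc h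
    have hppos : 0 < p := by
      rcases hp.lt_or_eq with h'|h'
      · exact h'
      · exfalso; rw [← h'] at h; nlinarith
    nlinarith
  exact ⟨fun a => key _ _ _ _ (hπ1μ.1 a) (hc1pos a) (hst1 a),
         fun a => key _ _ _ _ (hπ2μ.1 a) (hc2pos a) (hst2 a)⟩
end
end

section
/- Let π^μ be a stationary point of the replicator–mutator dynamics with mutation parameter μ > 0 and reference strategies c_i ∈ Δ°(A_i). Then π^μ is a 2μ-Nash equilibrium of the game: exploit(π^μ) = Σ_{i=1}^{2} max_{π̃_i∈Δ(A_i)} v_i^{π̃_i, π_{−i}^μ} ≤ 2μ. -/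
open Finset

noncomputable section

variable {A1 A2 : Type*}

/-- A stationary point `π^μ` of the replicator–mutator dynamics with
mutation parameter `μ > 0` is a `2μ`-Nash equilibrium:
`exploit(π^μ) = Σ_i max_{π̃_i ∈ Δ(A_i)} v_i^{π̃_i, π_{−i}^μ} ≤ 2μ`. -/
theorem rmd_stationary_approx_nash
    [Fintype A1] [Fintype A2]
    (u1 u2 : A1 → A2 → ℝ) (hzs : ∀ a1 a2, u2 a1 a2 = -u1 a1 a2)
    (μ : ℝ) (hμ : 0 < μ)
    (c1 : A1 → ℝ) (c2 : A2 → ℝ)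
    (hc1 : c1 ∈ stdSimplex ℝ A1) (hc1pos : ∀ a, 0 < c1 a)
    (hc2 : c2 ∈ stdSimplex ℝ A2) (hc2pos : ∀ a, 0 < c2 a)
    (π1μ : A1 → ℝ) (π2μ : A2 → ℝ)
    (hπ1μ : π1μ ∈ stdSimplex ℝ A1) (hπ2μ : π2μ ∈ stdSimplex ℝ A2)
    (hst1 : ∀ a, π1μ a * (cV1 u1 π2μ a - eV u1 π1μ π2μ) + μ * (c1 a - π1μ a) = 0)
    (hst2 : ∀ a, π2μ a * (cV2 u2 π1μ a - eV u2 π1μ π2μ) + μ * (c2 a - π2μ a) = 0) :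
    (⨆ p : stdSimplex ℝ A1, eV u1 p.1 π2μ) + (⨆ p : stdSimplex ℝ A2, eV u2 π1μ p.1) ≤
      2 * μ := by

  classical
  set v1 := eV u1 π1μ π2μ with hv1
  set v2 := eV u2 π1μ π2μ with hv2
  have key1 : ∀ a, cV1 u1 π2μ a ≤ v1 + μ := by
    intro a
    have h := hst1 a
    have hpos : 0 < π1μ a := by
      rcases (hπ1μ.1 a).lt_or_eq with hlt | heq
      · exact hlt
      · exfalso
        rw [← heq] at h
        simp at h
        rcases h with h | h
        exacts [hμ.ne' h, (hc1pos a).ne' h]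
    nlinarith [hc1pos a]
  have key2 : ∀ a, cV2 u2 π1μ a ≤ v2 + μ := by
    intro a
    have h := hst2 a
    have hpos : 0 < π2μ a := by
      rcases (hπ2μ.1 a).lt_or_eq with hlt | heq
      · exact hlt
      · exfalso
        rw [← heq] at h
        simp at h
        rcases h with h | h
        exacts [hμ.ne' h, (hc2pos a).ne' h]
    nlinarith [hc2pos a]
  have bound1 : ∀ p : A1 → ℝ, p ∈ stdSimplex ℝ A1 → eV u1 p π2μ ≤ v1 + μ := by
    intro p hp
    have : eV u1 p π2μ = ∑ a, p a * cV1 u1 π2μ a := by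
      simp [eV, cV1, Finset.mul_sum, mul_assoc]
    rw [this]
    calc ∑ a, p a * cV1 u1 π2μ a ≤ ∑ a, p a * (v1 + μ) := by
          apply Finset.sum_le_sum
          intro a _
          exact mul_le_mul_of_nonneg_left (key1 a) (hp.1 a)
      _ = v1 + μ := by rw [← Finset.sum_mul, hp.2, one_mul]
  have bound2 : ∀ p : A2 → ℝ, p ∈ stdSimplex ℝ A2 → eV u2 π1μ p ≤ v2 + μ := by
    intro p hp
    have : eV u2 π1μ p = ∑ a, p a * cV2 u2 π1μ a := by
      rw [eV, Finset.sum_comm]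
      simp [cV2, Finset.mul_sum]
      congr 1; ext a2; congr 1; ext a1; ring
    rw [this]
    calc ∑ a, p a * cV2 u2 π1μ a ≤ ∑ a, p a * (v2 + μ) := by
          apply Finset.sum_le_sum
          intro a _
          exact mul_le_mul_of_nonneg_left (key2 a) (hp.1 a)
      _ = v2 + μ := by rw [← Finset.sum_mul, hp.2, one_mul]
  have hsum : v2 = -v1 := by
    simp [hv1, hv2, eV, hzs, ← Finset.sum_neg_distrib, mul_comm]
  have hne1 : Nonempty (stdSimplex ℝ A1) := ⟨⟨π1μ, hπ1μ⟩⟩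
  have hne2 : Nonempty (stdSimplex ℝ A2) := ⟨⟨π2μ, hπ2μ⟩⟩
  have h1 : (⨆ p : stdSimplex ℝ A1, eV u1 p.1 π2μ) ≤ v1 + μ :=
    ciSup_le fun p => bound1 p.1 p.2
  have h2 : (⨆ p : stdSimplex ℝ A2, eV u2 π1μ p.1) ≤ v2 + μ :=
    ciSup_le fun p => bound2 p.1 p.2
  linarith
end
end

section
/- Let t ↦ π^t be a differentiable trajectory in Δ°(A₁) × Δ°(A₂) following the replicator–mutator dynamics with mutation parameter μ > 0 and reference strategies c_i ∈ Δ°(A_i), and let π^μ be a stationary point of these dynamics. Then the map t ↦ KL(π^μ, π^t) is differentiable and d/dt KL(π^μ, π^t) = −μ Σ_{i=1}^{2} Σ_{a_i∈A_i} c_i(a_i) (√(π_i^t(a_i)/π_i^μ(a_i)) − √(π_i^μ(a_i)/π_i^t(a_i)))². In particular the derivative is nonpositive, and it is zero if and only if π^t = π^μ. -/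
open Finset

noncomputable section

variable {A1 A2 : Type*}

lemma sqrt_diff_sq (x y : ℝ) (hx : 0 < x) (hy : 0 < y) :
    (Real.sqrt (x/y) - Real.sqrt (y/x))^2 = x/y + y/x - 2 := by
  have h1 : Real.sqrt (x/y) ^ 2 = x/y := Real.sq_sqrt (by positivity)
  have h2 : Real.sqrt (y/x) ^ 2 = y/x := Real.sq_sqrt (by positivity)
  have h3 : Real.sqrt (x/y) * Real.sqrt (y/x) = 1 := by
    rw [← Real.sqrt_mul (by positivity)]
    rw [show x/y*(y/x) = 1 by field_simp]
    exact Real.sqrt_one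
  nlinarith [h1, h2, h3]

lemma sum_sq_zero_iff {A : Type*} [Fintype A] (c x y : A → ℝ) (hc : ∀ a, 0 < c a)
    (hx : ∀ a, 0 < x a) (hy : ∀ a, 0 < y a) :
    (∑ a, c a * (Real.sqrt (x a / y a) - Real.sqrt (y a / x a))^2) = 0 ↔ x = y := by
  constructor
  · intro h
    funext a
    have hnn : ∀ a ∈ Finset.univ, 0 ≤ c a * (Real.sqrt (x a / y a) - Real.sqrt (y a / x a))^2 :=
      fun a _ => mul_nonneg (hc a).le (sq_nonneg _)
    have h0 := (Finset.sum_eq_zero_iff_of_nonneg hnn).mp h a (Finset.mem_univ a)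
    have hsq : (Real.sqrt (x a / y a) - Real.sqrt (y a / x a))^2 = 0 := by
      rcases mul_eq_zero.mp h0 with h' | h'
      · exact absurd h' (hc a).ne'
      · exact h'
    have := sqrt_diff_sq (x a) (y a) (hx a) (hy a)
    have hsum : x a / y a + y a / x a - 2 = 0 := by rw [← this, hsq]
    have h5 : (x a - y a)^2 = 0 := by
      have hne1 := (hx a).ne'
      have hne2 := (hy a).ne'
      field_simp at hsum
      nlinarith [hsum]
    have h6 : x a - y a = 0 := by
      exact pow_eq_zero_iff two_ne_zero |>.mp h5
    linarith
  · intro h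
    subst h
    refine Finset.sum_eq_zero fun a _ => ?_
    rw [div_self (hx a).ne', Real.sqrt_one]
    ring

lemma eV_left {A1 A2 : Type*} [Fintype A1] [Fintype A2] (u : A1 → A2 → ℝ) (p : A1 → ℝ) (q : A2 → ℝ) :
    ∑ a, p a * cV1 u q a = eV u p q := by
  simp [eV, cV1, Finset.mul_sum, mul_assoc]

lemma eV_right {A1 A2 : Type*} [Fintype A1] [Fintype A2] (u : A1 → A2 → ℝ) (p : A1 → ℝ) (q : A2 → ℝ) :
    ∑ a, q a * cV2 u p a = eV u p q := by
  rw [eV, Finset.sum_comm]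
  refine Finset.sum_congr rfl fun a2 _ => ?_
  rw [cV2, Finset.mul_sum]
  exact Finset.sum_congr rfl fun a1 _ => by ring

lemma eV_neg {A1 A2 : Type*} [Fintype A1] [Fintype A2] (u1 u2 : A1 → A2 → ℝ)
    (hzs : ∀ a1 a2, u2 a1 a2 = -u1 a1 a2) (p : A1 → ℝ) (q : A2 → ℝ) :
    eV u2 p q = - eV u1 p q := by
  simp [eV, hzs, mul_neg, ← Finset.sum_neg_distrib]

/-- Along a differentiable full-support trajectory of the
replicator–mutator dynamics, with `π^μ` a stationary point, `t ↦ KL(π^μ, π^t)` is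
differentiable with
`d/dt KL(π^μ, π^t) = −μ Σ_i Σ_{a_i} c_i(a_i) (√(π_i^t(a_i)/π_i^μ(a_i)) − √(π_i^μ(a_i)/π_i^t(a_i)))²`;
in particular the derivative is nonpositive, and it is zero iff `π^t = π^μ`. -/
theorem rmd_kl_derivative_stationary
    [Fintype A1] [Fintype A2]
    (u1 u2 : A1 → A2 → ℝ) (hzs : ∀ a1 a2, u2 a1 a2 = -u1 a1 a2)
    (μ : ℝ) (hμ : 0 < μ)
    (c1 : A1 → ℝ) (c2 : A2 → ℝ)
    (hc1 : c1 ∈ stdSimplex ℝ A1) (hc1pos : ∀ a, 0 < c1 a)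
    (hc2 : c2 ∈ stdSimplex ℝ A2) (hc2pos : ∀ a, 0 < c2 a)
    (π1 : ℝ → A1 → ℝ) (π2 : ℝ → A2 → ℝ)
    (hmem1 : ∀ t, π1 t ∈ stdSimplex ℝ A1) (hpos1 : ∀ t a, 0 < π1 t a)
    (hmem2 : ∀ t, π2 t ∈ stdSimplex ℝ A2) (hpos2 : ∀ t a, 0 < π2 t a)
    (hrmd1 : ∀ t a, HasDerivAt (fun s => π1 s a)
      (π1 t a * (cV1 u1 (π2 t) a - eV u1 (π1 t) (π2 t)) + μ * (c1 a - π1 t a)) t)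
    (hrmd2 : ∀ t a, HasDerivAt (fun s => π2 s a)
      (π2 t a * (cV2 u2 (π1 t) a - eV u2 (π1 t) (π2 t)) + μ * (c2 a - π2 t a)) t)
    (π1μ : A1 → ℝ) (π2μ : A2 → ℝ)
    (hπ1μ : π1μ ∈ stdSimplex ℝ A1) (hπ2μ : π2μ ∈ stdSimplex ℝ A2)
    (hst1 : ∀ a, π1μ a * (cV1 u1 π2μ a - eV u1 π1μ π2μ) + μ * (c1 a - π1μ a) = 0)
    (hst2 : ∀ a, π2μ a * (cV2 u2 π1μ a - eV u2 π1μ π2μ) + μ * (c2 a - π2μ a) = 0) :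
    ∀ t,
      HasDerivAt (fun s => KLd π1μ (π1 s) + KLd π2μ (π2 s))
        (-μ * ((∑ a, c1 a * (Real.sqrt (π1 t a / π1μ a) - Real.sqrt (π1μ a / π1 t a)) ^ 2) +
               (∑ a, c2 a * (Real.sqrt (π2 t a / π2μ a) - Real.sqrt (π2μ a / π2 t a)) ^ 2))) t ∧
      (-μ * ((∑ a, c1 a * (Real.sqrt (π1 t a / π1μ a) - Real.sqrt (π1μ a / π1 t a)) ^ 2) +
             (∑ a, c2 a * (Real.sqrt (π2 t a / π2μ a) - Real.sqrt (π2μ a / π2 t a)) ^ 2)) ≤ 0) ∧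
      ((-μ * ((∑ a, c1 a * (Real.sqrt (π1 t a / π1μ a) - Real.sqrt (π1μ a / π1 t a)) ^ 2) +
              (∑ a, c2 a * (Real.sqrt (π2 t a / π2μ a) - Real.sqrt (π2μ a / π2 t a)) ^ 2)) = 0 ↔
        (π1 t = π1μ ∧ π2 t = π2μ))) := by
  -- positivity of the stationary point
  have hπ1μpos : ∀ a, 0 < π1μ a := by
    intro a
    by_contra hcon
    push_neg at hcon
    have h0 : π1μ a = 0 := le_antisymm hcon (hπ1μ.1 a)
    have h2 := hst1 a
    rw [h0] at h2
    nlinarith [mul_pos hμ (hc1pos a), h2]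
  have hπ2μpos : ∀ a, 0 < π2μ a := by
    intro a
    by_contra hcon
    push_neg at hcon
    have h0 : π2μ a = 0 := le_antisymm hcon (hπ2μ.1 a)
    have h2 := hst2 a
    rw [h0] at h2
    nlinarith [mul_pos hμ (hc2pos a), h2]
  intro t
  -- derivative of each KL term
  have hd1 : HasDerivAt (fun s => KLd π1μ (π1 s))
      (∑ a, π1μ a * -((π1 t a * (cV1 u1 (π2 t) a - eV u1 (π1 t) (π2 t)) + μ * (c1 a - π1 t a))
        / π1 t a)) t := by
    have hfun : (fun s => KLd π1μ (π1 s))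
        = fun s => ∑ a, π1μ a * (Real.log (π1μ a) - Real.log (π1 s a)) := by
      funext s
      rw [KLd]
      exact Finset.sum_congr rfl fun a _ => by
        rw [Real.log_div (hπ1μpos a).ne' (hpos1 s a).ne']
    rw [hfun]
    exact HasDerivAt.fun_sum fun a _ =>
      (((hrmd1 t a).log (hpos1 t a).ne').const_sub (Real.log (π1μ a))).const_mul (π1μ a)
  have hd2 : HasDerivAt (fun s => KLd π2μ (π2 s))
      (∑ a, π2μ a * -((π2 t a * (cV2 u2 (π1 t) a - eV u2 (π1 t) (π2 t)) + μ * (c2 a - π2 t a))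
        / π2 t a)) t := by
    have hfun : (fun s => KLd π2μ (π2 s))
        = fun s => ∑ a, π2μ a * (Real.log (π2μ a) - Real.log (π2 s a)) := by
      funext s
      rw [KLd]
      exact Finset.sum_congr rfl fun a _ => by
        rw [Real.log_div (hπ2μpos a).ne' (hpos2 s a).ne']
    rw [hfun]
    exact HasDerivAt.fun_sum fun a _ =>
      (((hrmd2 t a).log (hpos2 t a).ne').const_sub (Real.log (π2μ a))).const_mul (π2μ a)
  -- algebraic identities
  have F1 : ∑ a, π1μ a * -((π1 t a * (cV1 u1 (π2 t) a - eV u1 (π1 t) (π2 t)) + μ * (c1 a - π1 t a))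
        / π1 t a)
      = -(eV u1 π1μ (π2 t)) + eV u1 (π1 t) (π2 t)
        - μ * (∑ a, π1μ a * c1 a / π1 t a) + μ := by
    have hpt : ∀ a ∈ Finset.univ, π1μ a * -((π1 t a * (cV1 u1 (π2 t) a - eV u1 (π1 t) (π2 t))
          + μ * (c1 a - π1 t a)) / π1 t a)
        = -(π1μ a * cV1 u1 (π2 t) a) + π1μ a * eV u1 (π1 t) (π2 t)
          - μ * (π1μ a * c1 a / π1 t a) + μ * π1μ a := by
      intro a _
      have hx := (hpos1 t a).ne'
      field_simp
      ring
    rw [Finset.sum_congr rfl hpt]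
    simp only [Finset.sum_add_distrib, Finset.sum_sub_distrib, Finset.sum_neg_distrib,
      ← Finset.mul_sum, ← Finset.sum_mul, eV_left, hπ1μ.2, one_mul, mul_one]
  have F2 : ∑ a, π2μ a * -((π2 t a * (cV2 u2 (π1 t) a - eV u2 (π1 t) (π2 t)) + μ * (c2 a - π2 t a))
        / π2 t a)
      = -(eV u2 (π1 t) π2μ) + eV u2 (π1 t) (π2 t)
        - μ * (∑ a, π2μ a * c2 a / π2 t a) + μ := by
    have hpt : ∀ a ∈ Finset.univ, π2μ a * -((π2 t a * (cV2 u2 (π1 t) a - eV u2 (π1 t) (π2 t))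
          + μ * (c2 a - π2 t a)) / π2 t a)
        = -(π2μ a * cV2 u2 (π1 t) a) + π2μ a * eV u2 (π1 t) (π2 t)
          - μ * (π2μ a * c2 a / π2 t a) + μ * π2μ a := by
      intro a _
      have hx := (hpos2 t a).ne'
      field_simp
      ring
    rw [Finset.sum_congr rfl hpt]
    simp only [Finset.sum_add_distrib, Finset.sum_sub_distrib, Finset.sum_neg_distrib,
      ← Finset.mul_sum, ← Finset.sum_mul, eV_right, hπ2μ.2, one_mul, mul_one]
  have F3 : eV u1 (π1 t) π2μ
      = eV u1 π1μ π2μ - μ * ((∑ a, π1 t a * c1 a / π1μ a) - 1) := by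
    rw [← eV_left]
    have hpt : ∀ a ∈ Finset.univ, π1 t a * cV1 u1 π2μ a
        = π1 t a * eV u1 π1μ π2μ - μ * (π1 t a * c1 a / π1μ a) + μ * π1 t a := by
      intro a _
      have h := hst1 a
      have hy := (hπ1μpos a).ne'
      field_simp
      linear_combination (π1 t a) * h
    rw [Finset.sum_congr rfl hpt]
    simp only [Finset.sum_add_distrib, Finset.sum_sub_distrib, ← Finset.mul_sum,
      ← Finset.sum_mul, (hmem1 t).2, one_mul, mul_one]
    ring
  have F4 : eV u2 π1μ (π2 t)
      = eV u2 π1μ π2μ - μ * ((∑ a, π2 t a * c2 a / π2μ a) - 1) := by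
    rw [← eV_right]
    have hpt : ∀ a ∈ Finset.univ, π2 t a * cV2 u2 π1μ a
        = π2 t a * eV u2 π1μ π2μ - μ * (π2 t a * c2 a / π2μ a) + μ * π2 t a := by
      intro a _
      have h := hst2 a
      have hy := (hπ2μpos a).ne'
      field_simp
      linear_combination (π2 t a) * h
    rw [Finset.sum_congr rfl hpt]
    simp only [Finset.sum_add_distrib, Finset.sum_sub_distrib, ← Finset.mul_sum,
      ← Finset.sum_mul, (hmem2 t).2, one_mul, mul_one]
    ring
  have hS1 : ∑ a, c1 a * (Real.sqrt (π1 t a / π1μ a) - Real.sqrt (π1μ a / π1 t a)) ^ 2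
      = (∑ a, π1 t a * c1 a / π1μ a) + (∑ a, π1μ a * c1 a / π1 t a) - 2 := by
    have hpt : ∀ a ∈ Finset.univ,
        c1 a * (Real.sqrt (π1 t a / π1μ a) - Real.sqrt (π1μ a / π1 t a)) ^ 2
        = π1 t a * c1 a / π1μ a + π1μ a * c1 a / π1 t a - 2 * c1 a := by
      intro a _
      rw [sqrt_diff_sq _ _ (hpos1 t a) (hπ1μpos a)]
      have hx := (hpos1 t a).ne'
      have hy := (hπ1μpos a).ne'
      field_simp
    rw [Finset.sum_congr rfl hpt]
    simp only [Finset.sum_sub_distrib, Finset.sum_add_distrib, ← Finset.mul_sum, hc1.2, mul_one]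
  have hS2 : ∑ a, c2 a * (Real.sqrt (π2 t a / π2μ a) - Real.sqrt (π2μ a / π2 t a)) ^ 2
      = (∑ a, π2 t a * c2 a / π2μ a) + (∑ a, π2μ a * c2 a / π2 t a) - 2 := by
    have hpt : ∀ a ∈ Finset.univ,
        c2 a * (Real.sqrt (π2 t a / π2μ a) - Real.sqrt (π2μ a / π2 t a)) ^ 2
        = π2 t a * c2 a / π2μ a + π2μ a * c2 a / π2 t a - 2 * c2 a := by
      intro a _
      rw [sqrt_diff_sq _ _ (hpos2 t a) (hπ2μpos a)]
      have hx := (hpos2 t a).ne'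
      have hy := (hπ2μpos a).ne'
      field_simp
    rw [Finset.sum_congr rfl hpt]
    simp only [Finset.sum_sub_distrib, Finset.sum_add_distrib, ← Finset.mul_sum, hc2.2, mul_one]
  have h3 : eV u1 π1μ (π2 t) = - eV u2 π1μ (π2 t) := by
    have := eV_neg u1 u2 hzs π1μ (π2 t); linarith
  have h4 : eV u2 (π1 t) π2μ = - eV u1 (π1 t) π2μ := eV_neg u1 u2 hzs (π1 t) π2μ
  have h5 : eV u2 (π1 t) (π2 t) = - eV u1 (π1 t) (π2 t) := eV_neg u1 u2 hzs (π1 t) (π2 t)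
  have h6 : eV u2 π1μ π2μ = - eV u1 π1μ π2μ := eV_neg u1 u2 hzs π1μ π2μ
  have key : (∑ a, π1μ a * -((π1 t a * (cV1 u1 (π2 t) a - eV u1 (π1 t) (π2 t))
        + μ * (c1 a - π1 t a)) / π1 t a))
      + (∑ a, π2μ a * -((π2 t a * (cV2 u2 (π1 t) a - eV u2 (π1 t) (π2 t))
        + μ * (c2 a - π2 t a)) / π2 t a))
      = -μ * ((∑ a, c1 a * (Real.sqrt (π1 t a / π1μ a) - Real.sqrt (π1μ a / π1 t a)) ^ 2) +
              (∑ a, c2 a * (Real.sqrt (π2 t a / π2μ a) - Real.sqrt (π2μ a / π2 t a)) ^ 2)) := by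
    rw [F1, F2, hS1, hS2, h3, h4, F3, F4, h5, h6]
    ring
  have hn1 : 0 ≤ ∑ a, c1 a * (Real.sqrt (π1 t a / π1μ a) - Real.sqrt (π1μ a / π1 t a)) ^ 2 :=
    Finset.sum_nonneg fun a _ => mul_nonneg (hc1pos a).le (sq_nonneg _)
  have hn2 : 0 ≤ ∑ a, c2 a * (Real.sqrt (π2 t a / π2μ a) - Real.sqrt (π2μ a / π2 t a)) ^ 2 :=
    Finset.sum_nonneg fun a _ => mul_nonneg (hc2pos a).le (sq_nonneg _)
  refine ⟨key ▸ (hd1.add hd2), ?_, ?_⟩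
  · nlinarith [hμ, hn1, hn2]
  · constructor
    · intro h
      have hS : (∑ a, c1 a * (Real.sqrt (π1 t a / π1μ a) - Real.sqrt (π1μ a / π1 t a)) ^ 2) +
          (∑ a, c2 a * (Real.sqrt (π2 t a / π2μ a) - Real.sqrt (π2μ a / π2 t a)) ^ 2) = 0 := by
        rcases mul_eq_zero.mp h with h' | h'
        · exact absurd h' (by simp [hμ.ne'])
        · exact h'
      have hS10 : (∑ a, c1 a * (Real.sqrt (π1 t a / π1μ a) - Real.sqrt (π1μ a / π1 t a)) ^ 2) = 0 := by
        linarith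
      have hS20 : (∑ a, c2 a * (Real.sqrt (π2 t a / π2μ a) - Real.sqrt (π2μ a / π2 t a)) ^ 2) = 0 := by
        linarith
      exact ⟨(sum_sq_zero_iff c1 (π1 t) π1μ hc1pos (hpos1 t) hπ1μpos).mp hS10,
             (sum_sq_zero_iff c2 (π2 t) π2μ hc2pos (hpos2 t) hπ2μpos).mp hS20⟩
    · rintro ⟨h1', h2'⟩
      rw [(sum_sq_zero_iff c1 (π1 t) π1μ hc1pos (hpos1 t) hπ1μpos).mpr h1',
          (sum_sq_zero_iff c2 (π2 t) π2μ hc2pos (hpos2 t) hπ2μpos).mpr h2']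
      ring
end
end

section
/- Let t ↦ π^t be a differentiable trajectory in Δ°(A₁) × Δ°(A₂) following the replicator–mutator dynamics with mutation parameter μ > 0 and reference strategies c_i ∈ Δ°(A_i). Then for every fixed profile π ∈ Δ(A₁) × Δ(A₂), the map t ↦ KL(π, π^t) is differentiable and d/dt KL(π, π^t) = Σ_{i=1}^{2} v_i^{π_i^t, π_{−i}} + 2μ − μ Σ_{i=1}^{2} Σ_{a_i∈A_i} c_i(a_i) π_i(a_i)/π_i^t(a_i). -/
open Finset

noncomputable section

variable {A1 A2 : Type*}

lemma klterm (pa : ℝ) (hpa : 0 ≤ pa) {f : ℝ → ℝ} {f' t : ℝ}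
    (hf : HasDerivAt f f' t) (hfs : ∀ s, 0 < f s) :
    HasDerivAt (fun s => pa * Real.log (pa / f s)) (-(pa * f' / f t)) t := by
  rcases hpa.eq_or_lt with h | h
  · rw [← h]
    simpa using hasDerivAt_const t (0 : ℝ)
  · have hfun : (fun s => pa * Real.log (pa / f s))
        = fun s => pa * (Real.log pa - Real.log (f s)) := by
      funext s; rw [Real.log_div h.ne' (hfs s).ne']
    rw [hfun]
    have := ((hasDerivAt_const t (Real.log pa)).fun_sub (hf.log (hfs t).ne')).const_mul pa
    refine this.congr_deriv ?_
    ring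

/-- Along a differentiable full-support trajectory of the
replicator–mutator dynamics, for every fixed profile `π`, `t ↦ KL(π, π^t)` is
differentiable with
`d/dt KL(π, π^t) = Σ_i v_i^{π_i^t, π_{−i}} + 2μ − μ Σ_i Σ_{a_i} c_i(a_i) π_i(a_i)/π_i^t(a_i)`. -/
theorem rmd_kl_derivative
    [Fintype A1] [Fintype A2]
    (u1 u2 : A1 → A2 → ℝ) (hzs : ∀ a1 a2, u2 a1 a2 = -u1 a1 a2)
    (μ : ℝ) (hμ : 0 < μ)
    (c1 : A1 → ℝ) (c2 : A2 → ℝ)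
    (hc1 : c1 ∈ stdSimplex ℝ A1) (hc1pos : ∀ a, 0 < c1 a)
    (hc2 : c2 ∈ stdSimplex ℝ A2) (hc2pos : ∀ a, 0 < c2 a)
    (π1 : ℝ → A1 → ℝ) (π2 : ℝ → A2 → ℝ)
    (hmem1 : ∀ t, π1 t ∈ stdSimplex ℝ A1) (hpos1 : ∀ t a, 0 < π1 t a)
    (hmem2 : ∀ t, π2 t ∈ stdSimplex ℝ A2) (hpos2 : ∀ t a, 0 < π2 t a)
    (hrmd1 : ∀ t a, HasDerivAt (fun s => π1 s a)
      (π1 t a * (cV1 u1 (π2 t) a - eV u1 (π1 t) (π2 t)) + μ * (c1 a - π1 t a)) t)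
    (hrmd2 : ∀ t a, HasDerivAt (fun s => π2 s a)
      (π2 t a * (cV2 u2 (π1 t) a - eV u2 (π1 t) (π2 t)) + μ * (c2 a - π2 t a)) t)
    (π1f : A1 → ℝ) (π2f : A2 → ℝ)
    (hπ1f : π1f ∈ stdSimplex ℝ A1) (hπ2f : π2f ∈ stdSimplex ℝ A2) :
    ∀ t, HasDerivAt (fun s => KLd π1f (π1 s) + KLd π2f (π2 s))
      ((eV u1 (π1 t) π2f + eV u2 π1f (π2 t)) + 2 * μ -
        μ * ((∑ a, c1 a * π1f a / π1 t a) + (∑ a, c2 a * π2f a / π2 t a))) t := by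
  intro t
  set D1 : A1 → ℝ := fun a =>
    π1 t a * (cV1 u1 (π2 t) a - eV u1 (π1 t) (π2 t)) + μ * (c1 a - π1 t a) with hD1
  set D2 : A2 → ℝ := fun a =>
    π2 t a * (cV2 u2 (π1 t) a - eV u2 (π1 t) (π2 t)) + μ * (c2 a - π2 t a) with hD2
  have H1 : HasDerivAt (fun s => KLd π1f (π1 s)) (∑ a, -(π1f a * D1 a / π1 t a)) t := by
    have := HasDerivAt.fun_sum (fun a (_ : a ∈ (univ : Finset A1)) =>
      klterm (π1f a) (hπ1f.1 a) (hrmd1 t a) (fun s => hpos1 s a))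
    simpa [KLd] using this
  have H2 : HasDerivAt (fun s => KLd π2f (π2 s)) (∑ a, -(π2f a * D2 a / π2 t a)) t := by
    have := HasDerivAt.fun_sum (fun a (_ : a ∈ (univ : Finset A2)) =>
      klterm (π2f a) (hπ2f.1 a) (hrmd2 t a) (fun s => hpos2 s a))
    simpa [KLd] using this
  have H := H1.fun_add H2
  refine H.congr_deriv ?_
  -- now pure algebra
  have e1 : ∀ a : A1, -(π1f a * D1 a / π1 t a)
      = (-(π1f a * cV1 u1 (π2 t) a) + eV u1 (π1 t) (π2 t) * π1f a)
        + (-(μ * (c1 a * π1f a / π1 t a)) + μ * π1f a) := by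
    intro a
    rw [hD1]
    field_simp [(hpos1 t a).ne']
    ring
  have e2 : ∀ a : A2, -(π2f a * D2 a / π2 t a)
      = (-(π2f a * cV2 u2 (π1 t) a) + eV u2 (π1 t) (π2 t) * π2f a)
        + (-(μ * (c2 a * π2f a / π2 t a)) + μ * π2f a) := by
    intro a
    rw [hD2]
    field_simp [(hpos2 t a).ne']
    ring
  rw [Finset.sum_congr rfl (fun a _ => e1 a), Finset.sum_congr rfl (fun a _ => e2 a)]
  simp only [Finset.sum_add_distrib, Finset.sum_neg_distrib, ← Finset.mul_sum]
  have hs1 : ∑ a, π1f a = 1 := hπ1f.2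
  have hs2 : ∑ a, π2f a = 1 := hπ2f.2
  have hq1 : ∑ a, π1f a * cV1 u1 (π2 t) a = eV u1 π1f (π2 t) := by
    simp [cV1, eV, Finset.mul_sum, mul_assoc]
  have hq2 : ∑ a, π2f a * cV2 u2 (π1 t) a = eV u2 (π1 t) π2f := by
    simp only [cV2, eV, Finset.mul_sum]
    rw [Finset.sum_comm]
    exact Finset.sum_congr rfl fun _ _ => Finset.sum_congr rfl fun _ _ => by ring
  have hneg : ∀ (p : A1 → ℝ) (q : A2 → ℝ), eV u2 p q = -eV u1 p q := by
    intro p q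
    simp [eV, hzs, Finset.sum_neg_distrib, mul_neg]
  rw [hs1, hs2, hq1, hq2, hneg, hneg, hneg]
  ring
end
end
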